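/- arXiv:2509.07750 — 9 statements merged into one kernel-verified Lean document; each statement's English description precedes it below -/
import Mathlib

section
/- Let n be odd, let π be an n-cycle in the symmetric group Sₙ, and let A = {α ∈ Sₙ : α(1) = 1}. Then {(α, απ) : α ∈ A} is an S₂-set in Sₙ × Sₙ of size (n−1)!. -/
/-- The set `{(α, απ) : α ∈ Sₙ, α(1) = 1}` in `Sₙ × Sₙ` (with the fixed point
taken to be `⟨0, _⟩ : Fin n`). -/
def fixPairSet (n : ℕ) (hpos : 0 < n) (π : Equiv.Perm (Fin n)) :
    Set (Equiv.Perm (Fin n) × Equiv.Perm (Fin n)) :=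
  {p | ∃ α : Equiv.Perm (Fin n), α ⟨0, hpos⟩ = ⟨0, hpos⟩ ∧ p = (α, α * π)}

open Equiv Equiv.Perm
lemma key {m : ℕ} (α : Perm (Fin (m+1))) : (Equiv.Perm.decomposeFin α).1 = α 0 := by
  conv_rhs => rw [show α = Equiv.Perm.decomposeFin.symm (Equiv.Perm.decomposeFin α) from
    (Equiv.Perm.decomposeFin.symm_apply_apply α).symm]
  rw [← Prod.mk.eta (p := Equiv.Perm.decomposeFin α),
    Equiv.Perm.decomposeFin_symm_apply_zero]

lemma card_fix (m : ℕ) :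
    Fintype.card {α : Perm (Fin (m+1)) // α 0 = 0} = m.factorial := by
  have e1 : {α : Perm (Fin (m+1)) // α 0 = 0} ≃
      {p : Fin (m+1) × Perm (Fin m) // p.1 = 0} :=
    Equiv.subtypeEquiv Equiv.Perm.decomposeFin fun α => by rw [key]
  have e2 : {p : Fin (m+1) × Perm (Fin m) // p.1 = 0} ≃ Perm (Fin m) :=
    { toFun := fun p => p.1.2
      invFun := fun τ => ⟨(0, τ), rfl⟩
      left_inv := by rintro ⟨⟨a, τ⟩, h⟩; obtain rfl : a = 0 := h; rfl
      right_inv := fun τ => rfl }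
  rw [Fintype.card_congr (e1.trans e2), Fintype.card_perm, Fintype.card_fin]


/-- For odd `n` and an `n`-cycle `π ∈ Sₙ`, the set `{(α, απ) : α(1) = 1}` is an
`S₂`-set in `Sₙ × Sₙ` of size `(n-1)!`. -/
theorem stmt_3 (n : ℕ) (hn : Odd n) (hpos : 0 < n) (π : Equiv.Perm (Fin n))
    (hcyc : π.IsCycle) (hsupp : π.support = Finset.univ) :
    (∀ p q r s : Equiv.Perm (Fin n) × Equiv.Perm (Fin n),
        p ∈ fixPairSet n hpos π → q ∈ fixPairSet n hpos π →
        r ∈ fixPairSet n hpos π → s ∈ fixPairSet n hpos π →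
        p * q = r * s → p = r ∧ q = s) ∧
    (fixPairSet n hpos π).ncard = Nat.factorial (n - 1) := by
  set x0 : Fin n := ⟨0, hpos⟩
  have hmove : ∀ x : Fin n, π x ≠ x := by
    intro x
    rw [← Equiv.Perm.mem_support, hsupp]
    exact Finset.mem_univ x
  -- every point is a zpow of π applied to x0
  have horb : ∀ x : Fin n, ∃ i : ℤ, (π ^ i) x0 = x := by
    intro x
    exact (hcyc.sameCycle (hmove x0) (hmove x))
  constructor
  · rintro p q r s ⟨α, hα, rfl⟩ ⟨β, hβ, rfl⟩ ⟨γ, hγ, rfl⟩ ⟨δ, hδ, rfl⟩ hmul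
    rw [Prod.mk_mul_mk, Prod.mk_mul_mk, Prod.mk.injEq] at hmul
    obtain ⟨h1, h2⟩ := hmul
    set σ : Equiv.Perm (Fin n) := γ⁻¹ * α with hσ
    have hδβ : δ = σ * β := by
      rw [hσ, mul_assoc, h1, ← mul_assoc, inv_mul_cancel, one_mul]
    have hcomm : σ * π = π * σ := by
      have h2' : α * π * β = γ * π * δ := by
        have := congrArg (· * π⁻¹) h2
        simpa [mul_assoc] using this
      have : γ⁻¹ * (α * π * β) = π * δ := by
        rw [h2', ← mul_assoc, ← mul_assoc, inv_mul_cancel, one_mul]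
      rw [hδβ, ← mul_assoc] at this
      have := congrArg (· * β⁻¹) this
      simpa [mul_assoc, hσ] using this
    have hσfix : σ x0 = x0 := by
      have h : α x0 = x0 := hα
      have h' : γ x0 = x0 := hγ
      show γ⁻¹ (α x0) = x0
      rw [h]
      conv_lhs => rw [← h']
      exact γ.symm_apply_apply x0
    have hσ1 : σ = 1 := by
      apply Equiv.ext
      intro x
      obtain ⟨i, rfl⟩ := horb x
      have hc : Commute σ π := hcomm
      have : σ * π ^ i = π ^ i * σ := (hc.zpow_right i)
      calc σ ((π ^ i) x0) = (σ * π ^ i) x0 := rfl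
        _ = (π ^ i * σ) x0 := by rw [this]
        _ = (π ^ i) x0 := by rw [Equiv.Perm.mul_apply, hσfix]
        _ = (1 : Equiv.Perm (Fin n)) ((π ^ i) x0) := rfl
    have hαγ : α = γ := by
      rw [hσ] at hσ1
      exact (inv_mul_eq_one.mp hσ1).symm
    have hβδ : β = δ := by
      rw [hδβ, hσ1, one_mul]
    exact ⟨by rw [hαγ], by rw [hβδ]⟩
  · have hinj : Function.Injective (fun α : Equiv.Perm (Fin n) => (α, α * π)) := by
      intro a b h
      exact congrArg Prod.fst h
    have himg : fixPairSet n hpos π =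
        (fun α : Equiv.Perm (Fin n) => (α, α * π)) '' {α | α x0 = x0} := by
      ext p
      constructor
      · rintro ⟨α, hα, rfl⟩; exact ⟨α, hα, rfl⟩
      · rintro ⟨α, hα, rfl⟩; exact ⟨α, hα, rfl⟩
    rw [himg, Set.ncard_image_of_injective _ hinj]
    obtain ⟨m, rfl⟩ : ∃ m, n = m + 1 := ⟨n - 1, (Nat.succ_pred_eq_of_pos hpos).symm⟩
    have hx0 : x0 = (0 : Fin (m+1)) := rfl
    rw [Set.ncard_eq_toFinset_card', Set.toFinset_setOf]
    simp only [hx0, Nat.add_sub_cancel]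
    rw [← card_fix m, Fintype.card_subtype]
end

section
/- Suppose a finite group Γ has a conjugacy class of size m. Then Γ × Γ contains an S₂[g]-set of size m, where g = |Γ|/m. -/
lemma stmt5_aux {Γ : Type*} [Group Γ] [Fintype Γ] (a : Γ) (m : ℕ)
    (hm : {x : Γ | IsConj a x}.ncard = m) :
    {z : Γ | z * a * z⁻¹ = a}.ncard = Fintype.card Γ / m := by
  classical
  -- identify the set with the stabilizer of `a` under conjugation
  have e : {z : Γ | z * a * z⁻¹ = a} ≃ MulAction.stabilizer (ConjAct Γ) a :=
    { toFun := fun z => ⟨ConjAct.toConjAct z.1, by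
        rw [MulAction.mem_stabilizer_iff, ConjAct.toConjAct_smul]; exact z.2⟩
      invFun := fun g => ⟨ConjAct.ofConjAct g.1, by
        have := g.2
        rw [MulAction.mem_stabilizer_iff, ConjAct.smul_def] at this
        exact this⟩
      left_inv := fun z => by simp
      right_inv := fun g => by simp }
  have horb := MulAction.card_orbit_mul_card_stabilizer_eq_card_group (ConjAct Γ) a
  have horbset : MulAction.orbit (ConjAct Γ) a = {x : Γ | IsConj a x} := by
    ext x
    exact (ConjAct.mem_orbit_conjAct (G := Γ)).trans isConj_comm
  have hcardorb : Fintype.card (MulAction.orbit (ConjAct Γ) a) = m := by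
    rw [← Nat.card_eq_fintype_card]
    calc Nat.card (MulAction.orbit (ConjAct Γ) a)
        = Nat.card {x : Γ | IsConj a x} := Nat.card_congr (Equiv.setCongr horbset)
      _ = m := by rw [Nat.card_coe_set_eq, hm]
  rw [hcardorb, ConjAct.card] at horb
  have hm0 : 0 < m := by
    rw [← hm]
    exact Set.ncard_pos (Set.toFinite _) |>.2 ⟨a, IsConj.refl a⟩
  have hstab : Fintype.card (MulAction.stabilizer (ConjAct Γ) a) = Fintype.card Γ / m :=
    (Nat.div_eq_of_eq_mul_right hm0 horb.symm).symm
  rw [← hstab]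
  rw [Set.ncard_eq_toFinset_card', Set.toFinset_card]
  exact Fintype.card_congr e

/-- If a finite group `Γ` has a conjugacy class of size `m`, then `Γ × Γ`
contains an `S₂[g]`-set of size `m`, where `g = |Γ|/m`: a set `B` of size `m`
such that for every `μ ∈ Γ × Γ` there are at most `g` ordered pairs of elements
of `B` whose product is `μ`. -/
theorem stmt_5 {Γ : Type*} [Group Γ] [Fintype Γ] (a : Γ) (m : ℕ)
    (hm : {x : Γ | IsConj a x}.ncard = m) :
    ∃ B : Set (Γ × Γ), B.ncard = m ∧
      ∀ μ : Γ × Γ,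
        {q : (Γ × Γ) × (Γ × Γ) | q.1 ∈ B ∧ q.2 ∈ B ∧ q.1 * q.2 = μ}.ncard ≤
          Fintype.card Γ / m := by
  classical
  refine ⟨(fun c => (c, c * a)) '' {x : Γ | IsConj a x}, ?_, ?_⟩
  · rw [Set.ncard_image_of_injective _ (fun x y h => (Prod.ext_iff.mp h).1), hm]
  · intro μ
    set B := (fun c : Γ => (c, c * a)) '' {x : Γ | IsConj a x} with hB
    set b := μ.2 * a⁻¹ * μ.1⁻¹ with hb
    have step1 : {q : (Γ × Γ) × (Γ × Γ) | q.1 ∈ B ∧ q.2 ∈ B ∧ q.1 * q.2 = μ}.ncard ≤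
        {x : Γ | x * a * x⁻¹ = b}.ncard := by
      apply Set.ncard_le_ncard_of_injOn (fun q => q.1.1)
      · rintro ⟨⟨p1, p2⟩, ⟨q1, q2⟩⟩ ⟨⟨c, hc, hceq⟩, ⟨d, hd, hdeq⟩, hprod⟩
        simp only [Prod.mk.injEq] at hceq hdeq
        obtain ⟨rfl, rfl⟩ := hceq
        obtain ⟨rfl, rfl⟩ := hdeq
        have h1 : c * d = μ.1 := congrArg Prod.fst hprod
        have h2 : c * a * (d * a) = μ.2 := congrArg Prod.snd hprod
        have hd' : d = c⁻¹ * μ.1 := by rw [← h1]; group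
        simp only [Set.mem_setOf_eq]
        rw [hd'] at h2
        rw [hb, ← h2]
        group
      · rintro ⟨⟨p1, p2⟩, ⟨q1, q2⟩⟩ ⟨⟨c, hc, hceq⟩, _, hprod⟩
          ⟨⟨p1', p2'⟩, ⟨q1', q2'⟩⟩ ⟨⟨c', hc', hceq'⟩, _, hprod'⟩ h
        simp only [Prod.mk.injEq] at hceq hceq'
        obtain ⟨rfl, rfl⟩ := hceq
        obtain ⟨rfl, rfl⟩ := hceq'
        simp only at h
        subst h
        have : (q1, q2) = (q1', q2') := by
          have h1 : ((c, c * a) : Γ × Γ) * (q1, q2) = (c, c * a) * (q1', q2') :=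
            hprod.trans hprod'.symm
          exact mul_left_cancel h1
        simp [this]
    have step2 : {x : Γ | x * a * x⁻¹ = b}.ncard ≤ {z : Γ | z * a * z⁻¹ = a}.ncard := by
      rcases Set.eq_empty_or_nonempty {x : Γ | x * a * x⁻¹ = b} with h | ⟨x₀, hx₀⟩
      · simp [h]
      · apply Set.ncard_le_ncard_of_injOn (fun x => x₀⁻¹ * x)
        · intro x hx
          simp only [Set.mem_setOf_eq] at hx hx₀ ⊢
          have : x₀⁻¹ * x * a * (x₀⁻¹ * x)⁻¹ = x₀⁻¹ * (x * a * x⁻¹) * x₀ := by group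
          rw [this, hx, ← hx₀]
          group
        · intro x _ y _ h
          exact mul_left_cancel h
    calc _ ≤ _ := step1
      _ ≤ _ := step2
      _ = _ := stmt5_aux a m hm
end

section
/- If a finite group Γ contains an abelian subgroup of index h, then for any k ≥ 3, every S_k'-set in Γ has size at most h(k−1). -/
/-- `A` is an `S_k'`-set in a group `Γ`: whenever
`α₁β₁⁻¹α₂β₂⁻¹⋯α_kβ_k⁻¹ = 1` with all `αᵢ, βᵢ ∈ A`, there is an index `i`
such that `αᵢ = βᵢ` or `βᵢ = α_{i+1}` (indices cyclic mod `k`). -/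
def IsSkSet' {Γ : Type*} [Group Γ] (k : ℕ) (A : Set Γ) : Prop :=
  ∀ a b : Fin k → Γ, (∀ i, a i ∈ A) → (∀ i, b i ∈ A) →
    (List.ofFn (fun i => a i * (b i)⁻¹)).prod = 1 →
    ∃ i : Fin k, a i = b i ∨ b i = a (finRotate k i)

/-- If a finite group `Γ` contains an abelian subgroup of index `h`, then for
`k ≥ 3`, every `S_k'`-set in `Γ` has size at most `h(k−1)`. -/
theorem stmt_8 {Γ : Type*} [Group Γ] [Fintype Γ] (H : Subgroup Γ) (h k : ℕ)
    (hab : ∀ x ∈ H, ∀ y ∈ H, x * y = y * x) (hidx : H.index = h)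
    (hk : 3 ≤ k) (A : Set Γ) (hA : IsSkSet' k A) :
    A.ncard ≤ h * (k - 1) := by
  classical
  obtain ⟨m, rfl⟩ : ∃ m, k = m + 3 := ⟨k - 3, by omega⟩
  by_contra hcon
  push_neg at hcon
  rw [Set.ncard_eq_toFinset_card'] at hcon
  have hmaps : ∀ x ∈ A.toFinset, (QuotientGroup.mk x : Γ ⧸ H) ∈ (Finset.univ : Finset (Γ ⧸ H)) :=
    fun _ _ => Finset.mem_univ _
  have hcard : (Finset.univ : Finset (Γ ⧸ H)).card * (m + 3 - 1) < A.toFinset.card := by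
    rwa [Finset.card_univ, ← Nat.card_eq_fintype_card, ← Subgroup.index, hidx]
  obtain ⟨y, -, hy⟩ := Finset.exists_lt_card_fiber_of_mul_lt_card_of_maps_to hmaps hcard
  have hk' : m + 3 ≤ (A.toFinset.filter fun x => (QuotientGroup.mk x : Γ ⧸ H) = y).card := by omega
  obtain ⟨t, ht, htcard⟩ := Finset.exists_subset_card_eq hk'
  let e := (t.equivFinOfCardEq htcard).symm
  let c : Fin (m + 3) → Γ := fun i => (e i : Γ)
  have hcinj : Function.Injective c := fun i j hij => e.injective (Subtype.ext hij)
  have hmem' : ∀ i, c i ∈ A.toFinset ∧ (QuotientGroup.mk (c i) : Γ ⧸ H) = y := by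
    intro i
    have := ht (e i).2
    simpa [Finset.mem_filter] using this
  have hcA : ∀ i, c i ∈ A := fun i => Set.mem_toFinset.mp (hmem' i).1
  letI : CommGroup H :=
    { (inferInstance : Group H) with
      mul_comm := fun a b => Subtype.ext (hab a a.2 b b.2) }
  have hmemH : ∀ i, (c 0)⁻¹ * c i ∈ H := by
    intro i
    rw [← QuotientGroup.eq, (hmem' 0).2, (hmem' i).2]
  let d : Fin (m + 3) → H := fun i => ⟨(c 0)⁻¹ * c i, hmemH i⟩
  let F : H →* Γ := (MulAut.conj (c 0)).toMonoidHom.comp H.subtype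
  have hpt : ∀ i : Fin (m + 3), c i * (c (i + 2))⁻¹ = F (d i * (d (i + 2))⁻¹) := by
    intro i
    simp [F, d, MulAut.conj_apply, mul_assoc]
  have hprod : (List.ofFn fun i => c i * (c (i + 2))⁻¹).prod = 1 := by
    have h1 : (List.ofFn fun i => c i * (c (i + 2))⁻¹)
        = (List.ofFn fun i => (d i * (d (i + 2))⁻¹ : H)).map F := by
      rw [List.map_ofFn]
      exact congrArg List.ofFn (funext fun i => hpt i)
    rw [h1, ← map_list_prod F]
    have h2 : (List.ofFn fun i => (d i * (d (i + 2))⁻¹ : H)).prod = 1 := by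
      rw [List.prod_ofFn]
      rw [Finset.prod_mul_distrib, Finset.prod_inv_distrib]
      rw [Fintype.prod_equiv (Equiv.addRight (2 : Fin (m + 3))) (fun i => d (i + 2)) d
        (fun i => rfl)]
      simp
    rw [h2, map_one]
  obtain ⟨i, hi⟩ := hA c (fun i => c (i + 2)) hcA (fun i => hcA _) hprod
  rw [finRotate_succ_apply] at hi
  rcases hi with hi | hi
  · have : i = i + 2 := hcinj hi
    have h2 : (2 : Fin (m + 3)) = 0 := by
      have := left_eq_add.mp this
      exact this
    simp [Fin.ext_iff, Nat.mod_eq_of_lt (show 2 < m + 3 by omega)] at h2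
  · have : i + 2 = i + 1 := hcinj hi
    have h2 : (2 : Fin (m + 3)) = 1 := add_left_cancel this
    simp [Fin.ext_iff, Nat.mod_eq_of_lt (show 2 < m + 3 by omega)] at h2
end

section
/- Let Γ be a finite group with |Γ| > 1, let m_k(Γ) be the number of integers ℓ with 2 ≤ ℓ ≤ k such that Γ contains an element of order ℓ, and let n_k(Γ) be the number of elements of Γ of order greater than k. Then every S_k-set in Γ has size at most m_k(Γ) + n_k(Γ). -/
/-- `A` is an `S_k`-set in a group `Γ`: whenever two ordered products of `k`
elements of `A` agree, the tuples agree. -/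
def IsSkSet {Γ : Type*} [Group Γ] (k : ℕ) (A : Set Γ) : Prop :=
  ∀ a b : Fin k → Γ, (∀ i, a i ∈ A) → (∀ i, b i ∈ A) →
    (List.ofFn a).prod = (List.ofFn b).prod → a = b

/-- Product of the tuple whose first `ℓ` entries are `b` and the rest are `a`. -/
lemma prod_step {Γ : Type*} [Monoid Γ] (k ℓ : ℕ) (hℓ : ℓ ≤ k) (b a : Γ) :
    (List.ofFn (fun i : Fin k => if (i : ℕ) < ℓ then b else a)).prod = b ^ ℓ * a ^ (k - ℓ) := by
  have h : (List.ofFn (fun i : Fin k => if (i : ℕ) < ℓ then b else a))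
      = List.replicate ℓ b ++ List.replicate (k - ℓ) a := by
    apply List.ext_getElem
    · simp; omega
    · intro i h₁ h₂
      simp only [List.getElem_ofFn]
      by_cases hi : i < ℓ
      · rw [List.getElem_append_left (by simpa using hi)]
        simp [hi]
      · rw [List.getElem_append_right (by simpa using hi)]
        simp [hi]
  rw [h, List.prod_append, List.prod_replicate, List.prod_replicate]

/-- Let `Γ` be a finite group with `|Γ| > 1` and `k ≥ 2`. If `m_k(Γ)` is the
number of `ℓ` with `2 ≤ ℓ ≤ k` such that `Γ` has an element of order `ℓ`, and
`n_k(Γ)` is the number of elements of order greater than `k`, then every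
`S_k`-set in `Γ` has size at most `m_k(Γ) + n_k(Γ)`. -/
theorem stmt_9 {Γ : Type*} [Group Γ] [Fintype Γ] (hΓ : 1 < Fintype.card Γ)
    (k : ℕ) (hk : 2 ≤ k) (A : Set Γ) (hA : IsSkSet k A) :
    A.ncard ≤ {ℓ : ℕ | 2 ≤ ℓ ∧ ℓ ≤ k ∧ ∃ x : Γ, orderOf x = ℓ}.ncard +
      {x : Γ | k < orderOf x}.ncard := by
  classical
  set M : Set ℕ := {ℓ : ℕ | 2 ≤ ℓ ∧ ℓ ≤ k ∧ ∃ x : Γ, orderOf x = ℓ} with hM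
  set N : Set Γ := {x : Γ | k < orderOf x} with hN
  have hMfin : M.Finite := (Set.finite_Icc 2 k).subset
    (fun ℓ hℓ => Set.mem_Icc.mpr ⟨hℓ.1, hℓ.2.1⟩)
  have hNfin : N.Finite := Set.toFinite _
  by_cases h1 : (1 : Γ) ∈ A
  · -- then A = {1}
    have hA1 : A = {1} := by
      ext b
      simp only [Set.mem_singleton_iff]
      constructor
      · intro hb
        by_contra hbne
        have hf : ∀ i : Fin k, (if (i : ℕ) < 1 then b else 1) ∈ A := by
          intro i; split <;> assumption
        have hg : ∀ i : Fin k, (if (i : ℕ) < k - 1 then (1:Γ) else b) ∈ A := by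
          intro i; split <;> assumption
        have hpf := prod_step k 1 (by omega) b (1 : Γ)
        have hpg := prod_step k (k-1) (by omega) (1 : Γ) b
        have hkk : k - (k - 1) = 1 := by omega
        rw [hkk] at hpg
        have heq := hA _ _ hf hg (by rw [hpf, hpg]; group)
        have h00 : (if (0:ℕ) < 1 then b else (1:Γ)) = (if (0:ℕ) < k - 1 then (1:Γ) else b) :=
          congrFun heq ⟨0, by omega⟩
        rw [if_pos (by norm_num), if_pos (by omega)] at h00
        exact hbne h00
      · rintro rfl; exact h1
    rw [hA1, Set.ncard_singleton]
    obtain ⟨x, hx⟩ := Fintype.exists_ne_of_one_lt_card hΓ 1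
    have hx2 : 2 ≤ orderOf x := by
      have h0 : 0 < orderOf x := orderOf_pos x
      have h1' : orderOf x ≠ 1 := fun h => hx (orderOf_eq_one_iff.mp h)
      omega
    by_cases hxk : orderOf x ≤ k
    · have hmem : orderOf x ∈ M := ⟨hx2, hxk, x, rfl⟩
      have : 0 < M.ncard := (Set.ncard_pos hMfin).mpr ⟨_, hmem⟩
      omega
    · have hmem : x ∈ N := by simp only [hN, Set.mem_setOf_eq]; omega
      have : 0 < N.ncard := (Set.ncard_pos hNfin).mpr ⟨_, hmem⟩
      omega
  · -- 1 ∉ A : order map injective on small-order part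
    have hord2 : ∀ a ∈ A, 2 ≤ orderOf a := by
      intro a ha
      have h0 : 0 < orderOf a := orderOf_pos a
      have h1' : orderOf a ≠ 1 := fun h => h1 (orderOf_eq_one_iff.mp h ▸ ha)
      omega
    have hinj : Set.InjOn orderOf (A ∩ {x | orderOf x ≤ k}) := by
      rintro a ⟨haA, hak⟩ b ⟨hbA, hbk⟩ hab
      by_contra hne
      obtain ⟨ℓ, hℓ⟩ : ∃ ℓ, orderOf a = ℓ := ⟨_, rfl⟩
      have hℓpos : 0 < ℓ := hℓ ▸ orderOf_pos a
      have hℓk : ℓ ≤ k := hℓ ▸ hak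
      have hf : ∀ i : Fin k, (if (i : ℕ) < ℓ then a else a) ∈ A := by
        intro i; split <;> exact haA
      have hg : ∀ i : Fin k, (if (i : ℕ) < ℓ then b else a) ∈ A := by
        intro i; split <;> assumption
      have hpf := prod_step k ℓ hℓk a a
      have hpg := prod_step k ℓ hℓk b a
      have haℓ : a ^ ℓ = 1 := hℓ ▸ pow_orderOf_eq_one a
      have hbℓ : b ^ ℓ = 1 := by rw [← hℓ, hab]; exact pow_orderOf_eq_one b
      have heq := hA _ _ hf hg (by rw [hpf, hpg, haℓ, hbℓ])
      have h00 : (if (0:ℕ) < ℓ then a else a) = (if (0:ℕ) < ℓ then b else a) :=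
        congrFun heq ⟨0, by omega⟩
      rw [if_pos hℓpos, if_pos hℓpos] at h00
      exact hne h00
    have hsub : A = (A ∩ {x | orderOf x ≤ k}) ∪ (A ∩ N) := by
      ext x
      simp only [Set.mem_union, Set.mem_inter_iff, Set.mem_setOf_eq, hN]
      constructor
      · intro hx; by_cases h : orderOf x ≤ k
        · exact Or.inl ⟨hx, h⟩
        · exact Or.inr ⟨hx, by omega⟩
      · rintro (⟨h, _⟩ | ⟨h, _⟩) <;> exact h
    calc A.ncard ≤ (A ∩ {x | orderOf x ≤ k}).ncard + (A ∩ N).ncard := by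
          nth_rewrite 1 [hsub]; exact Set.ncard_union_le _ _
      _ ≤ M.ncard + N.ncard :=
          add_le_add (Set.ncard_le_ncard_of_injOn orderOf
              (fun x hx => ⟨hord2 x hx.1, hx.2, x, rfl⟩) hinj hMfin)
            (Set.ncard_le_ncard Set.inter_subset_right hNfin)
end

section
/- Suppose a finite group Γ has an abelian subgroup H of index 2, and A ⊆ Γ is an S_k-set (k ≥ 2). Then (|A| − 1)^k ≤ |Γ|/2. -/
private lemma prod_mem_iff_even {Γ : Type*} [Group Γ] (H : Subgroup Γ)
    (hidx : H.index = 2) :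
    ∀ l : List Γ, (∀ g ∈ l, g ∉ H) → (l.prod ∈ H ↔ Even l.length) := by
  intro l
  induction l with
  | nil => simpa using H.one_mem
  | cons a l ih =>
    intro h
    have ha : a ∉ H := h a List.mem_cons_self
    have hl := ih (fun g hg => h g (List.mem_cons_of_mem a hg))
    rw [List.prod_cons, Subgroup.mul_mem_iff_of_index_two hidx, List.length_cons,
      Nat.even_add_one]
    tauto

/-- If a finite group `Γ` has an abelian subgroup `H` of index 2 and `A` is an
`S_k`-set in `Γ` (`k ≥ 2`), then `(|A| − 1)^k ≤ |Γ|/2`. -/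
theorem stmt_13 {Γ : Type*} [Group Γ] [Fintype Γ] (H : Subgroup Γ)
    (hab : ∀ x ∈ H, ∀ y ∈ H, x * y = y * x) (hidx : H.index = 2)
    (k : ℕ) (hk : 2 ≤ k) (A : Set Γ) (hA : IsSkSet k A) :
    (A.ncard - 1) ^ k ≤ Fintype.card Γ / 2 := by
  obtain ⟨m, rfl⟩ : ∃ m, k = m + 2 := ⟨k - 2, by omega⟩
  -- A meets H in at most one element
  have hcap : (A ∩ ↑H).ncard ≤ 1 := by
    rw [Set.ncard_le_one (Set.toFinite _)]
    rintro a ⟨haA, haH⟩ b ⟨hbA, hbH⟩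
    by_contra hab'
    have := hA (Fin.cons a (Fin.cons b (fun _ => b)))
      (Fin.cons b (Fin.cons a (fun _ => b)))
      (by intro i; refine Fin.cases (by simpa) (fun j => ?_) i
          refine Fin.cases (by simpa) (fun j' => by simpa) j)
      (by intro i; refine Fin.cases (by simpa) (fun j => ?_) i
          refine Fin.cases (by simpa) (fun j' => by simpa) j)
      (by simp only [List.ofFn_succ, Fin.cons_succ, Fin.cons_zero, List.prod_cons]
          rw [← mul_assoc, ← mul_assoc, hab a haH b hbH])
    exact hab' (by simpa using congrFun this 0)
  have hBA : A.ncard ≤ (A \ ↑H).ncard + 1 := by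
    calc A.ncard = ((A \ ↑H) ∪ (A ∩ ↑H)).ncard := by
          rw [Set.diff_union_inter]
      _ ≤ (A \ ↑H).ncard + (A ∩ ↑H).ncard := Set.ncard_union_le _ _
      _ ≤ (A \ ↑H).ncard + 1 := by omega
  set B := A \ ↑H with hB
  have key : B.ncard ^ (m + 2) ≤ Fintype.card Γ / 2 := by
    rcases Set.eq_empty_or_nonempty B with hBe | ⟨b0, hb0⟩
    · simp [hBe]
    · have hnotH : ∀ b ∈ B, b ∉ H := fun b hb => hb.2
      have hpar : ∀ x : Fin (m + 2) → ↥B,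
          ((List.ofFn (fun i => (x i : Γ))).prod ∈ H ↔ Even (m + 2)) := by
        intro x
        have := prod_mem_iff_even H hidx (List.ofFn (fun i => (x i : Γ))) (by
          intro g hg
          obtain ⟨i, rfl⟩ := (List.mem_ofFn).mp hg
          exact hnotH _ (x i).2)
        simpa using this
      set c : Γ := (List.ofFn (fun _ : Fin (m + 2) => b0)).prod with hc
      have hcpar : (c ∈ H ↔ Even (m + 2)) := by
        have := prod_mem_iff_even H hidx (List.ofFn (fun _ : Fin (m + 2) => b0)) (by
          intro g hg
          obtain ⟨i, rfl⟩ := (List.mem_ofFn).mp hg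
          exact hnotH _ hb0)
        simpa [hc] using this
      have hprod : ∀ x : Fin (m + 2) → ↥B,
          c⁻¹ * (List.ofFn (fun i => (x i : Γ))).prod ∈ H := by
        intro x
        rw [Subgroup.mul_mem_iff_of_index_two hidx, inv_mem_iff]
        rw [hcpar, hpar x]
      have hinj : Function.Injective
          (fun x : Fin (m + 2) → ↥B =>
            (⟨c⁻¹ * (List.ofFn (fun i => (x i : Γ))).prod, hprod x⟩ : ↥H)) := by
        intro x y hxy
        have h2 : (List.ofFn (fun i => (x i : Γ))).prod
            = (List.ofFn (fun i => (y i : Γ))).prod := by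
          have := congrArg Subtype.val hxy
          simpa using this
        have := hA (fun i => (x i : Γ)) (fun i => (y i : Γ))
          (fun i => (x i).2.1) (fun i => (y i).2.1) h2
        funext i
        exact Subtype.ext (congrFun this i)
      have hcard : Nat.card (Fin (m + 2) → ↥B) ≤ Nat.card ↥H :=
        Nat.card_le_card_of_injective _ hinj
      have hH2 : 2 * Nat.card ↥H = Fintype.card Γ := by
        have := H.index_mul_card
        rw [hidx] at this
        simpa [Nat.card_eq_fintype_card] using this
      rw [Nat.card_fun, Nat.card_eq_fintype_card (α := Fin (m + 2)), Fintype.card_fin,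
        Nat.card_coe_set_eq] at hcard
      omega
  calc (A.ncard - 1) ^ (m + 2) ≤ B.ncard ^ (m + 2) :=
        Nat.pow_le_pow_left (by omega) _
    _ ≤ Fintype.card Γ / 2 := key
end

section
/- Let G be a graph on n vertices with girth at least 2k+1 containing h Hamilton cycles. Then the symmetric group Sₙ contains an S_k-set of size at least h/2^{n−1}. -/
/-- A Hamilton cycle of a graph `G`, viewed as a spanning subgraph of `G` which
is connected and 2-regular. -/
def IsHamCycleSubgraph {n : ℕ} (G H : SimpleGraph (Fin n)) : Prop :=
  H ≤ G ∧ H.Connected ∧ ∀ v, (H.neighborSet v).ncard = 2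

set_option linter.unusedSectionVars false

namespace Stmt15Aux
open SimpleGraph

section Walks
variable {V : Type*} {G : SimpleGraph V}

def walkOfSeq (G : SimpleGraph V) (f : ℕ → V) :
    ∀ d, (∀ i, i < d → G.Adj (f i) (f (i+1))) → G.Walk (f 0) (f d)
  | 0, _ => .nil
  | d+1, h => (walkOfSeq G f d fun i hi => h i (by omega)).concat (h d (by omega))

lemma support_walkOfSeq (f : ℕ → V) (d : ℕ) (h : ∀ i, i < d → G.Adj (f i) (f (i+1))) :
    (walkOfSeq G f d h).support = (List.range (d+1)).map f := by
  induction d with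
  | zero => simp [walkOfSeq, List.range_succ]
  | succ d ih =>
      rw [walkOfSeq, Walk.support_concat, ih, List.range_succ (n := d+1)]
      simp

lemma length_walkOfSeq (f : ℕ → V) (d : ℕ) (h : ∀ i, i < d → G.Adj (f i) (f (i+1))) :
    (walkOfSeq G f d h).length = d := by
  induction d with
  | zero => simp [walkOfSeq, List.range_succ]
  | succ d ih => rw [walkOfSeq, Walk.length_concat, ih]

lemma edges_walkOfSeq (f : ℕ → V) (d : ℕ) (h : ∀ i, i < d → G.Adj (f i) (f (i+1))) :
    (walkOfSeq G f d h).edges = (List.range d).map (fun i => s(f i, f (i+1))) := by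
  induction d with
  | zero => simp [walkOfSeq]
  | succ d ih =>
      rw [walkOfSeq, Walk.edges_concat, ih, List.range_succ (n := d)]
      simp

lemma girth_le_of_seq (f : ℕ → V) (d : ℕ) (hd : 3 ≤ d)
    (hadj : ∀ i, i < d → G.Adj (f i) (f (i+1)))
    (hinj : ∀ i j, i < d → j < d → f i = f j → i = j)
    (hclose : f d = f 0) : G.girth ≤ d := by
  have hg : ∀ i, i < d - 1 → G.Adj (f (i+1)) (f (i+1+1)) := fun i hi => hadj (i+1) (by omega)
  have hend : (fun i => f (i+1)) (d - 1) = f 0 := by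
    show f (d-1+1) = f 0
    rw [show d-1+1 = d from by omega]
    exact hclose
  set p : G.Walk (f 1) (f 0) :=
    (walkOfSeq G (fun i => f (i+1)) (d-1) hg).copy rfl hend with hp
  have hsupp : p.support = (List.range d).map (fun i => f (i+1)) := by
    rw [hp, Walk.support_copy, support_walkOfSeq, show d-1+1 = d from by omega]
  have hinj' : ∀ i j, i < d → j < d → f (i+1) = f (j+1) → i = j := by
    intro i j hi hj hij
    rcases Nat.lt_or_ge (i+1) d with h1 | h1 <;> rcases Nat.lt_or_ge (j+1) d with h2 | h2
    · have := hinj _ _ h1 h2 hij; omega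
    · rw [show j+1 = d from by omega, hclose] at hij
      have := hinj _ _ h1 (by omega) hij; omega
    · rw [show i+1 = d from by omega, hclose] at hij
      have := hinj (j+1) 0 h2 (by omega) hij.symm; omega
    · omega
  have hpath : p.IsPath := by
    rw [Walk.isPath_def, hsupp]
    refine List.Nodup.map_on ?_ List.nodup_range
    intro i hi j hj hij
    exact hinj' i j (List.mem_range.mp hi) (List.mem_range.mp hj) hij
  have hedge : s(f 0, f 1) ∉ p.edges := by
    intro hmem2
    rw [hp, Walk.edges_copy, edges_walkOfSeq] at hmem2
    simp only [List.mem_map, List.mem_range] at hmem2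
    obtain ⟨i, hi, heq⟩ := hmem2
    rw [Sym2.eq_iff] at heq
    rcases heq with ⟨ha, hb⟩ | ⟨ha, hb⟩
    · have := hinj (i+1) 0 (by omega) (by omega) ha
      omega
    · have h1 := hinj (i+1) 1 (by omega) (by omega) ha
      have h2 := hinj (i+1+1) 0 (by omega) (by omega) hb
      omega
  have h0 : G.Adj (f 0) (f 1) := hadj 0 (by omega)
  have hcyc : (Walk.cons h0 p).IsCycle :=
    SimpleGraph.Path.cons_isCycle ⟨p, hpath⟩ h0 hedge
  have hlen : (Walk.cons h0 p).length = d := by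
    rw [Walk.length_cons, hp, Walk.length_copy, length_walkOfSeq]
    omega
  have hle : G.egirth ≤ (d : ℕ∞) := by
    have := le_egirth.mp le_rfl _ _ hcyc
    rw [hlen] at this
    exact this
  have := ENat.toNat_le_toNat hle (by simp)
  simpa [SimpleGraph.girth] using this

lemma no_short_closed_walk {k : ℕ} (hG : 2*k+1 ≤ G.girth) (L : ℕ) (hL1 : 1 ≤ L) (hL : L ≤ 2*k)
    (z : ℕ → V) (hclose : z L = z 0) (hadj : ∀ t, t < L → G.Adj (z t) (z (t+1)))
    (hnb : ∀ t, t + 2 ≤ L → z (t+2) ≠ z t) (hwrap : 3 ≤ L → z 1 ≠ z (L-1)) : False := by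
  rcases Nat.lt_or_ge L 3 with hL3 | hL3
  · interval_cases L
    · exact (hadj 0 (by omega)).ne hclose.symm
    · exact hnb 0 (by omega) hclose
  set ζ : ℕ → V := fun t => z (t % L) with hζ
  have hmodlt : ∀ t : ℕ, t % L < L := fun t => Nat.mod_lt t (by omega)
  have hadjP : ∀ t, G.Adj (ζ t) (ζ (t+1)) := by
    intro t
    have h1 : (t+1) % L = (t % L + 1) % L := by
      rw [Nat.add_mod t 1 L, Nat.mod_eq_of_lt (show 1 < L by omega)]
    rcases Nat.lt_or_ge (t % L + 1) L with h | h
    · have h2 : (t+1) % L = t % L + 1 := by rw [h1, Nat.mod_eq_of_lt h]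
      simpa [hζ, h2] using hadj (t % L) (by omega)
    · have h0 : t % L + 1 = L := by have := hmodlt t; omega
      have h2 : (t+1) % L = 0 := by rw [h1, h0, Nat.mod_self]
      have := hadj (t % L) (by omega)
      rw [show t % L + 1 = L from h0, hclose] at this
      simpa [hζ, h2] using this
  have hnbP : ∀ t, ζ (t+2) ≠ ζ t := by
    intro t
    have h1 : (t+2) % L = (t % L + 2) % L := by
      rw [Nat.add_mod t 2 L, Nat.mod_eq_of_lt (show 2 < L by omega)]
    rcases Nat.lt_or_ge (t % L + 2) L with h | h
    · have h2 : (t+2) % L = t % L + 2 := by rw [h1, Nat.mod_eq_of_lt h]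
      simpa [hζ, h2] using hnb (t % L) (by omega)
    · rcases Nat.lt_or_ge (t % L + 2) (L + 1) with h' | h'
      · have h0 : t % L + 2 = L := by omega
        have h2 : (t+2) % L = 0 := by rw [h1, h0, Nat.mod_self]
        have := hnb (t % L) (by omega)
        rw [h0, hclose] at this
        simpa [hζ, h2] using this
      · have h0 : t % L = L - 1 := by have := hmodlt t; omega
        have h2 : (t+2) % L = 1 := by
          rw [h1, h0, show L - 1 + 2 = L + 1 from by omega]
          simp [Nat.add_mod_left, Nat.mod_eq_of_lt (show 1 < L from by omega)]
        simp only [hζ, h2, h0]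
        exact fun hcon => (hwrap hL3) hcon
  have hex : ∃ d, 0 < d ∧ ∃ i, ζ (i + d) = ζ i := by
    refine ⟨L, by omega, 0, ?_⟩
    simp [hζ, Nat.mod_self, Nat.zero_mod]
  classical
  obtain ⟨d, ⟨hdpos, i, hi⟩, hdmin⟩ :
      ∃ d, (0 < d ∧ ∃ i, ζ (i + d) = ζ i) ∧
        ∀ d', d' < d → ¬ (0 < d' ∧ ∃ i, ζ (i + d') = ζ i) :=
    ⟨Nat.find hex, Nat.find_spec hex, fun d' h => Nat.find_min hex h⟩
  have hdL : d ≤ L := by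
    by_contra hcon
    exact hdmin L (by omega) ⟨by omega, 0, by simp [hζ, Nat.mod_self, Nat.zero_mod]⟩
  rcases show d = 1 ∨ d = 2 ∨ 3 ≤ d from by omega with rfl | rfl | hd3
  · exact (hadjP i).ne hi.symm
  · exact hnbP i hi
  · have hle : G.girth ≤ d := by
      refine girth_le_of_seq (fun t => ζ (i + t)) d hd3 (fun j hj => ?_) ?_ ?_
      · simpa [← Nat.add_assoc] using hadjP (i + j)
      · intro s t hs ht hst
        rcases Nat.lt_trichotomy s t with h | h | h
        · exfalso
          exact hdmin (t - s) (by omega) ⟨by omega, i + s,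
            by rw [show i + s + (t - s) = i + t from by omega]; exact hst.symm⟩
        · exact h
        · exfalso
          exact hdmin (s - t) (by omega) ⟨by omega, i + t,
            by rw [show i + t + (s - t) = i + s from by omega]; exact hst⟩
      · simpa using hi
    omega

section Fwd
variable [LinearOrder V]

/-- `u → v` is a forward step for orientation `o`. -/
def fwd (o : Sym2 V → Bool) (u v : V) : Prop :=
  u ≠ v ∧ o s(u, v) = decide (u < v)

lemma fwd_antisymm {o : Sym2 V → Bool} {u v : V} (h1 : fwd o u v) (h2 : fwd o v u) : False := by
  obtain ⟨hne, he1⟩ := h1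
  obtain ⟨-, he2⟩ := h2
  rw [Sym2.eq_swap] at he2
  rw [he1] at he2
  rcases lt_or_gt_of_ne hne with h | h <;> simp [h, asymm h] at he2

/-- Two forward walks of length `ℓ ≤ k` with the same endpoints coincide. -/
lemma forward_walk_unique {k : ℕ} (hG : 2*k+1 ≤ G.girth) (o : Sym2 V → Bool)
    (ℓ : ℕ) (hℓ : ℓ ≤ k) (x y : ℕ → V)
    (hx : ∀ j, j < ℓ → G.Adj (x j) (x (j+1)) ∧ fwd o (x j) (x (j+1)))
    (hy : ∀ j, j < ℓ → G.Adj (y j) (y (j+1)) ∧ fwd o (y j) (y (j+1)))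
    (h0 : x 0 = y 0) (hend : x ℓ = y ℓ) : ∀ j, j ≤ ℓ → x j = y j := by
  by_contra hcon
  push_neg at hcon
  classical
  have hexj : ∃ j, j ≤ ℓ ∧ x j ≠ y j := hcon
  obtain ⟨j₀, ⟨hj₀ℓ, hj₀ne⟩, hj₀min⟩ :
      ∃ j₀, (j₀ ≤ ℓ ∧ x j₀ ≠ y j₀) ∧ ∀ j < j₀, ¬ (j ≤ ℓ ∧ x j ≠ y j) :=
    ⟨Nat.find hexj, Nat.find_spec hexj, fun j h => Nat.find_min hexj h⟩
  have hagree : ∀ j, j < j₀ → x j = y j := by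
    intro j hj
    by_contra hne
    exact hj₀min j hj ⟨by omega, hne⟩
  have hj₀pos : 1 ≤ j₀ := by
    rcases Nat.eq_zero_or_pos j₀ with rfl | h
    · exact absurd h0 hj₀ne
    · exact h
  have hj₀lt : j₀ < ℓ := by
    rcases Nat.lt_or_ge j₀ ℓ with h | h
    · exact h
    · exact absurd (by rw [show j₀ = ℓ from by omega]; exact hend) hj₀ne
  have hexm : ∃ t, j₀ + t ≤ ℓ ∧ x (j₀ + t) = y (j₀ + t) := ⟨ℓ - j₀, by omega, by
    rw [show j₀ + (ℓ - j₀) = ℓ from by omega]; exact hend⟩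
  obtain ⟨t₀, ⟨htℓ, hteq⟩, htmin⟩ :
      ∃ t, (j₀ + t ≤ ℓ ∧ x (j₀ + t) = y (j₀ + t)) ∧
        ∀ t' < t, ¬ (j₀ + t' ≤ ℓ ∧ x (j₀ + t') = y (j₀ + t')) :=
    ⟨Nat.find hexm, Nat.find_spec hexm, fun t h => Nat.find_min hexm h⟩
  set m := j₀ + t₀ with hm
  have hdiff : ∀ j, j₀ ≤ j → j < m → x j ≠ y j := by
    intro j h1 h2 hne
    exact htmin (j - j₀) (by omega) ⟨by omega, by rw [show j₀ + (j - j₀) = j from by omega]; exact hne⟩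
  have hmgt : j₀ < m := by
    rcases Nat.eq_zero_or_pos t₀ with h | h
    · exfalso; rw [hm, h] at hteq; exact hj₀ne (by simpa using hteq)
    · omega
  set a := j₀ - 1 with ha
  set L1 := m - a with hL1def
  set L := 2 * L1 with hLdef
  have hL1ge : 2 ≤ L1 := by omega
  have hmℓ : m ≤ ℓ := htℓ
  -- the closed walk
  set z : ℕ → V := fun t => if t ≤ L1 then x (a + t) else y (a + (L - t)) with hz
  have hzx : ∀ t, t ≤ L1 → z t = x (a + t) := by intro t h; simp [hz, h]
  have hzy : ∀ t, L1 ≤ t → t ≤ L → z t = y (a + (L - t)) := by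
    intro t h1 h2
    rcases Nat.lt_or_ge L1 t with h | h
    · simp [hz, Nat.not_le.mpr h]
    · have ht : t = L1 := by omega
      subst ht
      simp only [hz, le_refl, if_pos]
      rw [show a + L1 = m from by omega, show L - L1 = L1 from by omega,
        show a + L1 = m from by omega]
      exact hteq
  have hxa : ∀ j, a ≤ j → j < m → G.Adj (x j) (x (j+1)) ∧ fwd o (x j) (x (j+1)) :=
    fun j h1 h2 => hx j (by omega)
  have hya : ∀ j, a ≤ j → j < m → G.Adj (y j) (y (j+1)) ∧ fwd o (y j) (y (j+1)) :=
    fun j h1 h2 => hy j (by omega)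
  refine no_short_closed_walk hG L (by omega) (by omega) z ?_ ?_ ?_ ?_
  · rw [hzy L (by omega) (by omega), hzx 0 (by omega)]
    simp only [Nat.sub_self, Nat.add_zero]
    exact (hagree a (by omega)).symm
  · intro t ht
    rcases Nat.lt_or_ge t L1 with h | h
    · rw [hzx t (by omega), hzx (t+1) (by omega), show a + (t+1) = a + t + 1 from by omega]
      exact (hxa (a+t) (by omega) (by omega)).1
    · rw [hzy t (by omega) (by omega), hzy (t+1) (by omega) (by omega)]
      have hs : L - t = (L - (t+1)) + 1 := by omega
      rw [hs, show a + (L - (t+1) + 1) = a + (L - (t+1)) + 1 from by omega]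
      exact ((hya (a + (L - (t+1))) (by omega) (by omega)).1).symm
  · intro t ht hzeq
    rcases Nat.lt_or_ge (t+2) (L1+1) with h | h
    · -- both x side
      rw [hzx t (by omega), hzx (t+2) (by omega)] at hzeq
      have f1 := (hxa (a+t) (by omega) (by omega)).2
      have f2 := (hxa (a+t+1) (by omega) (by omega)).2
      rw [show a + t + 1 + 1 = a + (t+2) from by omega, hzeq] at f2
      exact fwd_antisymm f1 f2
    · rcases Nat.lt_or_ge t L1 with h' | h'
      · -- t = L1 - 1, t + 2 = L1 + 1 : junction at m
        have ht1 : t = L1 - 1 := by omega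
        rw [hzx t (by omega), hzy (t+2) (by omega) (by omega)] at hzeq
        have e1 : a + t = m - 1 := by omega
        have e2 : a + (L - (t+2)) = m - 1 := by omega
        rw [e1, e2] at hzeq
        exact hdiff (m-1) (by omega) (by omega) hzeq.symm
      · -- both y side
        rw [hzy t (by omega) (by omega), hzy (t+2) (by omega) (by omega)] at hzeq
        have f1 := (hya (a + (L - (t+2))) (by omega) (by omega)).2
        have f2 := (hya (a + (L - (t+2)) + 1) (by omega) (by omega)).2
        rw [show a + (L - (t+2)) + 1 = a + (L - (t+1)) from by omega] at f1 f2
        rw [show a + (L - (t+1)) + 1 = a + (L - t) from by omega] at f2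
        rw [← hzeq] at f2
        exact fwd_antisymm f1 f2
  · intro hL3 hzeq
    rw [hzx 1 (by omega), hzy (L-1) (by omega) (by omega)] at hzeq
    rw [show a + 1 = j₀ from by omega, show a + (L - (L-1)) = j₀ from by omega] at hzeq
    exact hj₀ne hzeq

end Fwd
end Walks

section Fintypes
variable {V : Type*} [Fintype V] [DecidableEq V]

lemma eq_pair_of_ncard_two {s : Set V} {x y : V} (h : s.ncard = 2) (hx : x ∈ s) (hy : y ∈ s)
    (hxy : x ≠ y) : s = {x, y} := by
  have hfin : s.Finite := s.toFinite
  refine (Set.eq_of_subset_of_ncard_le ?_ ?_ hfin).symm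
  · intro a ha
    rcases ha with rfl | ha
    · exact hx
    · rw [Set.mem_singleton_iff] at ha; subst ha; exact hy
  · rw [h, Set.ncard_pair hxy]

lemma exists_traversal {H : SimpleGraph V}
    (hconn : H.Connected) (hreg : ∀ v, (H.neighborSet v).ncard = 2) :
    ∃ σ : Equiv.Perm V, (∀ v, H.Adj v (σ v)) ∧ (∀ v, σ (σ v) ≠ v) := by
  classical
  -- the "other neighbour" function
  have hpair : ∀ v : V, ∃ p : V × V, p.1 ≠ p.2 ∧ H.neighborSet v = {p.1, p.2} := by
    intro v
    obtain ⟨a, b, hab, hs⟩ := Set.ncard_eq_two.mp (hreg v)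
    exact ⟨(a, b), hab, hs⟩
  choose pair hpair1 hpair2 using hpair
  set oth : V → V → V := fun v u => if u = (pair v).1 then (pair v).2 else (pair v).1 with hoth
  have oth_adj : ∀ v u, H.Adj v (oth v u) := by
    intro v u
    have h1 : (pair v).1 ∈ H.neighborSet v := by rw [hpair2]; simp
    have h2 : (pair v).2 ∈ H.neighborSet v := by rw [hpair2]; simp
    by_cases h : u = (pair v).1 <;> simp only [hoth, h, if_true, if_false, reduceIte] <;>
      [exact h2; exact h1]
  have oth_ne : ∀ v u, oth v u ≠ u := by
    intro v u
    by_cases h : u = (pair v).1 <;> simp only [hoth, h, if_true, if_false, reduceIte]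
    · exact (hpair1 v).symm
    · exact fun hc => h hc.symm
  have oth_eq : ∀ v u w, H.Adj v u → H.Adj v w → w ≠ u → w = oth v u := by
    intro v u w hu hw hwu
    have hu' : u = (pair v).1 ∨ u = (pair v).2 := by
      have : u ∈ H.neighborSet v := hu
      rw [hpair2] at this; simpa using this
    have hw' : w = (pair v).1 ∨ w = (pair v).2 := by
      have : w ∈ H.neighborSet v := hw
      rw [hpair2] at this; simpa using this
    rcases hu' with h1 | h1
    · simp only [hoth, h1, if_true, reduceIte]
      rcases hw' with h2 | h2
      · exact absurd (h2.trans h1.symm) hwu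
      · exact h2
    · rcases hw' with h2 | h2
      · have : ¬ (u = (pair v).1) := by rw [h1]; intro hc; exact (hpair1 v) hc.symm
        simp only [hoth, this, if_false, reduceIte]
        exact h2
      · exfalso; exact hwu (h2.trans h1.symm)
  have oth_invol : ∀ v u, H.Adj v u → oth v (oth v u) = u :=
    fun v u hu => (oth_eq v (oth v u) u (oth_adj v u) hu (fun h => oth_ne v u h.symm)).symm
  -- the walk
  obtain ⟨v₀⟩ := hconn.nonempty
  set sq : ℕ → V × V := fun t => Nat.rec ((pair v₀).1, v₀)
    (fun _ pr => (pr.2, oth pr.2 pr.1)) t with hsq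
  have hsq0 : sq 0 = ((pair v₀).1, v₀) := rfl
  have hsqS : ∀ t, sq (t+1) = ((sq t).2, oth (sq t).2 (sq t).1) := fun t => rfl
  set u : ℕ → V := fun t => (sq t).2 with hu
  have hsq_eq : ∀ t, sq (t+1) = (u t, u (t+1)) := fun t => rfl
  have hAdjsq : ∀ t, H.Adj (sq t).1 (sq t).2 := by
    intro t
    induction t with
    | zero =>
        rw [hsq0]
        have : (pair v₀).1 ∈ H.neighborSet v₀ := by rw [hpair2]; simp
        exact (H.adj_symm this)
    | succ t ih =>
        rw [hsqS t]
        exact oth_adj (sq t).2 (sq t).1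
  have hAdj : ∀ t, H.Adj (u t) (u (t+1)) := by
    intro t
    have := hAdjsq (t+1)
    rw [hsq_eq t] at this
    exact this
  have hstep : ∀ t, u (t+2) = oth (u (t+1)) (u t) := fun t => rfl
  have hnb : ∀ t, u (t+2) ≠ u t := fun t => by rw [hstep t]; exact oth_ne _ _
  -- backward injectivity and periodicity
  have hback : ∀ s t, sq (s+1) = sq (t+1) → sq s = sq t := by
    intro s t hst
    rw [hsqS s, hsqS t, Prod.mk.injEq] at hst
    obtain ⟨h1, h2⟩ := hst
    rw [h1] at h2
    have hs' : oth (sq t).2 (oth (sq t).2 (sq s).1) = oth (sq t).2 (oth (sq t).2 (sq t).1) := by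
      rw [h2]
    rw [oth_invol _ _ (H.adj_symm (by rw [← h1]; exact hAdjsq s)),
      oth_invol _ _ (H.adj_symm (hAdjsq t))] at hs'
    exact Prod.ext (by rw [hs']) h1
  have hshift : ∀ j s t, sq (s + j) = sq (t + j) → sq s = sq t := by
    intro j
    induction j with
    | zero => intro s t h; exact h
    | succ j ih =>
        intro s t h
        rw [show s + (j+1) = (s + j) + 1 from by omega,
          show t + (j+1) = (t + j) + 1 from by omega] at h
        exact ih s t (hback _ _ h)
  have hexper : ∃ p, 0 < p ∧ sq p = sq 0 := by
    obtain ⟨s, t, hne, heq⟩ := Finite.exists_ne_map_eq_of_infinite sq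
    rcases Nat.lt_or_ge s t with h | h
    · refine ⟨t - s, by omega, ?_⟩
      refine hshift s (t - s) 0 ?_
      rw [show t - s + s = t from by omega, show 0 + s = s from by omega]
      exact heq.symm
    · have h' : t < s := by omega
      refine ⟨s - t, by omega, ?_⟩
      refine hshift t (s - t) 0 ?_
      rw [show s - t + t = s from by omega, show 0 + t = t from by omega]
      exact heq
  obtain ⟨m, ⟨hmpos, hmper⟩, hmmin⟩ :
      ∃ m, (0 < m ∧ sq m = sq 0) ∧ ∀ p, p < m → ¬ (0 < p ∧ sq p = sq 0) :=
    ⟨Nat.find hexper, Nat.find_spec hexper, fun p h => Nat.find_min hexper h⟩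
  have hper : ∀ t, sq (t + m) = sq t := by
    intro t
    induction t with
    | zero => simpa using hmper
    | succ t ih =>
        rw [show t + 1 + m = (t + m) + 1 from by omega, hsqS (t+m), ih, ← hsqS t]
  have huper : ∀ t, u (t + m) = u t := fun t => by
    rw [hu]; simp only []; rw [hper t]
  have humod : ∀ t, u t = u (t % m) := by
    intro t
    induction t using Nat.strong_induction_on with
    | _ t ih =>
        rcases Nat.lt_or_ge t m with h | h
        · rw [Nat.mod_eq_of_lt h]
        · calc u t = u (t - m + m) := by congr 1; omega
            _ = u (t - m) := huper _
            _ = u ((t - m) % m) := ih _ (by omega)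
            _ = u (t % m) := by congr 1; exact (Nat.mod_eq_sub_mod h).symm
  -- neighbourhoods along the walk
  have Nbr : ∀ j, H.neighborSet (u (j+1)) = {u j, u (j+2)} := by
    intro j
    refine eq_pair_of_ncard_two (hreg _) ?_ ?_ ?_
    · exact (hAdj j).symm
    · exact hAdj (j+1)
    · intro hc
      exact hnb j hc.symm
  -- distinctness within one period
  have Kne : ∀ a c, a < c → c < m → u a = u c → u (a+1) = u (c+1) → False := by
    intro a c hac hcm heq h1
    have hsq1 : sq (a+1) = sq (c+1) := by
      rw [hsq_eq a, hsq_eq c, heq, h1]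
    have hsq2 : sq a = sq c := hback _ _ hsq1
    have hsq3 : sq (c - a) = sq 0 := by
      refine hshift a (c - a) 0 ?_
      rw [show c - a + a = c from by omega, show 0 + a = a from by omega]
      exact hsq2.symm
    exact hmmin (c - a) (by omega) ⟨by omega, hsq3⟩
  have hndist : ∀ a c, a < c → c < m → u a ≠ u c := by
    intro a c hac hcm heq
    set t := c - a with htdef
    have htpos : 1 ≤ t := by omega
    rcases Nat.eq_or_lt_of_le htpos with h1 | ht2
    · -- t = 1
      exact (hAdj a).ne (by rw [show a + 1 = c from by omega]; exact heq.symm ▸ heq)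
    · -- t ≥ 2
      set A := a + m with hA
      have hQ : ∀ i, i ≤ t → u (A + i) = u (A + (t - i)) := by
        intro i
        induction i using Nat.strong_induction_on with
        | _ i ih =>
            intro hit
            rcases Nat.lt_or_ge i 2 with hi2 | hi2
            · interval_cases i
              · have e1 : A + 0 = a + m := by omega
                have e2 : A + (t - 0) = c + m := by omega
                rw [e1, e2, huper a, huper c]
                exact heq
              · -- i = 1
                have hC1 : c + m = (c + (m-1)) + 1 := by omega
                have hNC := Nbr (c + (m-1))
                rw [← hC1] at hNC
                have hAC : u A = u (c + m) := by rw [huper a, huper c]; exact heq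
                have hNA' : H.neighborSet (u A) = {u (c + (m-1)), u (c + (m-1) + 2)} := by
                  rw [hAC]; exact hNC
                have hmem : u (A + 1) ∈ ({u (c + (m-1)), u (c + (m-1) + 2)} : Set V) := by
                  rw [← hNA']
                  exact hAdj A
                rcases hmem with hm1 | hm1
                · rw [hm1]
                  congr 1
                  omega
                · exfalso
                  rw [Set.mem_singleton_iff] at hm1
                  have h1' : u (a + 1) = u (c + 1) := by
                    have e1 : A + 1 = (a+1) + m := by omega
                    have e2 : c + (m-1) + 2 = (c+1) + m := by omega
                    rw [e1, huper (a+1), e2, huper (c+1)] at hm1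
                    exact hm1
                  exact Kne a c hac hcm heq h1'
            · -- i ≥ 2
              obtain ⟨i', rfl⟩ : ∃ i', i = i' + 2 := ⟨i - 2, by omega⟩
              have q1 := ih i' (by omega) (by omega)
              have q2 := ih (i'+1) (by omega) (by omega)
              set j := A + (t - (i' + 2)) with hj
              have e1 : A + (t - (i'+1)) = j + 1 := by omega
              have e2 : A + (t - i') = j + 2 := by omega
              rw [e1] at q2
              rw [e2] at q1
              have hs : u (A + (i'+2)) = oth (u (A + (i'+1))) (u (A + i')) := by
                rw [show A + (i'+2) = (A + i') + 2 from by omega,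
                  show A + (i'+1) = (A + i') + 1 from by omega]
              rw [hs, q1, q2]
              have hs2 : u (j+2) = oth (u (j+1)) (u j) := hstep j
              rw [hs2, oth_invol _ _ (H.adj_symm (hAdj j))]
      -- termination
      rcases Nat.even_or_odd t with ⟨r, hr⟩ | ⟨r, hr⟩
      · have hrpos : 1 ≤ r := by omega
        have q := hQ (r+1) (by omega)
        have e1 : t - (r+1) = r - 1 := by omega
        rw [e1] at q
        refine hnb (A + (r-1)) ?_
        rw [show A + (r-1) + 2 = A + (r+1) from by omega, q]
      · have hrpos : 1 ≤ r := by omega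
        have q := hQ (r+1) (by omega)
        have e1 : t - (r+1) = r := by omega
        rw [e1] at q
        refine (hAdj (A + r)).ne ?_
        rw [show A + r + 1 = A + (r+1) from by omega, q]
  -- surjectivity via connectivity
  have hu0 : u 0 = v₀ := rfl
  have hclosed : ∀ w x, (∃ r, u r = w) → H.Adj w x → (∃ r, u r = x) := by
    rintro w x ⟨r, rfl⟩ hadj
    have e1 : u r = u ((r + (m-1)) + 1) := by
      rw [show r + (m-1) + 1 = r + m from by omega, huper r]
    have hN := Nbr (r + (m-1))
    rw [← e1] at hN
    have : x ∈ H.neighborSet (u r) := hadj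
    rw [hN] at this
    rcases this with h | h
    · exact ⟨r + (m-1), h.symm⟩
    · rw [Set.mem_singleton_iff] at h
      exact ⟨r + (m-1) + 2, h.symm⟩
  have hsurj : ∀ w, ∃ r, u r = w := by
    intro w
    have hreach : H.Reachable v₀ w := hconn.preconnected v₀ w
    obtain ⟨p⟩ := hreach
    have : ∀ (s w' : V) (p : H.Walk s w'), (∃ r, u r = s) → (∃ r, u r = w') := by
      intro s w' p
      induction p with
      | nil => exact id
      | cons hadj q ih => exact fun hs => ih (hclosed _ _ hs hadj)
    exact this v₀ w p ⟨0, hu0⟩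
  -- the bijection
  set φ : Fin m → V := fun i => u i with hφ
  have hφinj : Function.Injective φ := by
    intro i j hij
    by_contra hne
    have hne' : (i : ℕ) ≠ (j : ℕ) := fun hc => hne (Fin.ext hc)
    rcases Nat.lt_or_ge (i : ℕ) (j : ℕ) with h | h
    · exact hndist i j h j.isLt hij
    · exact hndist j i (by omega) i.isLt hij.symm
  have hφsurj : Function.Surjective φ := by
    intro w
    obtain ⟨r, hr⟩ := hsurj w
    have hm' : r % m < m := Nat.mod_lt r (by omega)
    exact ⟨⟨r % m, hm'⟩, by rw [hφ]; simp only []; rw [← humod r]; exact hr⟩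
  have hm3 : 3 ≤ m := by
    have hcard : Fintype.card V ≤ m := by
      simpa [Fintype.card_fin] using Fintype.card_le_of_surjective φ hφsurj
    have h3 : 3 ≤ Fintype.card V := by
      have hne1 : v₀ ≠ (pair v₀).1 := by
        intro hc
        have : (pair v₀).1 ∈ H.neighborSet v₀ := by rw [hpair2]; simp
        exact (H.adj_symm this).ne hc.symm
      have hne2 : v₀ ≠ (pair v₀).2 := by
        intro hc
        have : (pair v₀).2 ∈ H.neighborSet v₀ := by rw [hpair2]; simp
        exact (H.adj_symm this).ne hc.symm
      have : ({v₀, (pair v₀).1, (pair v₀).2} : Finset V).card = 3 := by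
        rw [Finset.card_insert_of_notMem (by simp [hne1, hne2]),
          Finset.card_insert_of_notMem (by simp [hpair1 v₀]), Finset.card_singleton]
      rw [← this]
      exact Finset.card_le_univ _
    omega
  haveI : NeZero m := ⟨by omega⟩
  set e : Fin m ≃ V := Equiv.ofBijective φ ⟨hφinj, hφsurj⟩ with he
  set σ : Equiv.Perm V := e.permCongr (Equiv.addRight (1 : Fin m)) with hσ
  have hσap : ∀ i : Fin m, σ (φ i) = u (((i : ℕ) + 1) % m) := by
    intro i
    rw [hσ, Equiv.permCongr_apply]
    have : e.symm (φ i) = i := by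
      rw [he]
      exact (Equiv.ofBijective φ ⟨hφinj, hφsurj⟩).symm_apply_apply i
    rw [this]
    have h2 : e (i + 1) = φ (i + 1) := rfl
    rw [Equiv.coe_addRight, h2, hφ]
    simp only []
    congr 1
    rw [Fin.val_add, Fin.val_one', Nat.mod_eq_of_lt (show 1 < m from by omega)]
  have hσu : ∀ r : ℕ, r < m → σ (u r) = u ((r + 1) % m) := by
    intro r hr
    have : u r = φ ⟨r, hr⟩ := rfl
    rw [this, hσap ⟨r, hr⟩]
  refine ⟨σ, ?_, ?_⟩
  · intro v
    obtain ⟨i, rfl⟩ := hφsurj v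
    rw [show φ i = u (i : ℕ) from rfl, hσu (i : ℕ) i.isLt, ← humod ((i : ℕ) + 1)]
    exact hAdj (i : ℕ)
  · intro v
    obtain ⟨i, rfl⟩ := hφsurj v
    rw [show φ i = u (i : ℕ) from rfl, hσu (i : ℕ) i.isLt,
      hσu (((i : ℕ) + 1) % m) (Nat.mod_lt _ (by omega))]
    intro hc
    have hplt : (((i:ℕ)+1) % m + 1) % m < m := Nat.mod_lt _ (by omega)
    have hpi : (((i:ℕ)+1) % m + 1) % m ≠ (i : ℕ) := by
      have hi : (i:ℕ) < m := i.isLt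
      rcases Nat.lt_or_ge ((i:ℕ)+1) m with h1 | h1
      · rw [Nat.mod_eq_of_lt h1]
        rcases Nat.lt_or_ge ((i:ℕ)+1+1) m with h2 | h2
        · rw [Nat.mod_eq_of_lt h2]; omega
        · have h3 : (i:ℕ)+1+1 = m := by omega
          rw [h3, Nat.mod_self]; omega
      · have h2 : (i:ℕ)+1 = m := by omega
        rw [h2, Nat.mod_self, Nat.mod_eq_of_lt (show 0+1 < m from by omega)]
        omega
    rcases Nat.lt_or_ge ((((i:ℕ)+1) % m + 1) % m) (i : ℕ) with h | h
    · exact hndist _ _ h i.isLt hc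
    · exact hndist _ _ (by omega) hplt hc.symm

/-- The graph of a permutation. -/
def cg (σ : Equiv.Perm V) : SimpleGraph V := SimpleGraph.fromRel (fun u v => σ u = v)

lemma cg_adj (σ : Equiv.Perm V) (u v : V) :
    (cg σ).Adj u v ↔ u ≠ v ∧ (σ u = v ∨ σ v = u) := SimpleGraph.fromRel_adj _ u v

def ham (G H : SimpleGraph V) : Prop :=
  H ≤ G ∧ H.Connected ∧ ∀ v, (H.neighborSet v).ncard = 2

lemma cg_inv (σ : Equiv.Perm V) : cg σ⁻¹ = cg σ := by
  ext u v
  rw [cg_adj, cg_adj]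
  constructor
  · rintro ⟨h1, h2 | h2⟩
    · exact ⟨h1, Or.inr (by rw [← h2]; simp)⟩
    · exact ⟨h1, Or.inl (by rw [← h2]; simp)⟩
  · rintro ⟨h1, h2 | h2⟩
    · exact ⟨h1, Or.inr (by rw [← h2]; simp)⟩
    · exact ⟨h1, Or.inl (by rw [← h2]; simp)⟩

lemma good_ne {G : SimpleGraph V} {σ : Equiv.Perm V} (hσ : ham G (cg σ)) (v : V) : σ v ≠ v := by
  intro hc
  obtain ⟨a, b, hab, hset⟩ := Set.ncard_eq_two.mp (hσ.2.2 v)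
  have ha : (cg σ).Adj v a := by rw [← SimpleGraph.mem_neighborSet, hset]; simp
  have hb : (cg σ).Adj v b := by rw [← SimpleGraph.mem_neighborSet, hset]; simp
  rw [cg_adj] at ha hb
  have ha' : σ a = v := by
    rcases ha.2 with h | h
    · exact absurd (hc.symm.trans h) ha.1
    · exact h
  have hb' : σ b = v := by
    rcases hb.2 with h | h
    · exact absurd (hc.symm.trans h) hb.1
    · exact h
  exact hab (σ.injective (ha'.trans hb'.symm))

lemma good_ne2 {G : SimpleGraph V} {σ : Equiv.Perm V} (hσ : ham G (cg σ)) (v : V) :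
    σ (σ v) ≠ v := by
  intro hc
  have hN : (cg σ).neighborSet v ⊆ {σ v} := by
    intro a ha
    rw [SimpleGraph.mem_neighborSet, cg_adj] at ha
    rcases ha.2 with h | h
    · rw [← h]; rfl
    · have : a = σ⁻¹ v := by rw [← h]; simp
      rw [this, Set.mem_singleton_iff]
      apply_fun σ
      simp [hc]
    
  have := Set.ncard_le_ncard hN (Set.finite_singleton _)
  rw [hσ.2.2 v, Set.ncard_singleton] at this
  omega

lemma good_adj {G : SimpleGraph V} {σ : Equiv.Perm V} (hσ : ham G (cg σ)) (v : V) :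
    (cg σ).Adj v (σ v) := by
  rw [cg_adj]
  exact ⟨(good_ne hσ v).symm, Or.inl rfl⟩

lemma good_edge_inj {G : SimpleGraph V} {σ : Equiv.Perm V} (hσ : ham G (cg σ)) :
    Function.Injective (fun v => s(v, σ v)) := by
  intro v w hvw
  simp only [Sym2.eq_iff] at hvw
  rcases hvw with ⟨h1, _⟩ | ⟨h1, h2⟩
  · exact h1
  · exfalso
    rw [← h2] at h1
    exact good_ne2 hσ v h1.symm

lemma ham_traversal {G H : SimpleGraph V} (hH : ham G H) :
    ∃ σ : Equiv.Perm V, cg σ = H ∧ σ⁻¹ ≠ σ ∧ cg σ⁻¹ = H := by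
  obtain ⟨σ, hadj, hσ2⟩ := exists_traversal hH.2.1 hH.2.2
  have hinvadj : ∀ v, H.Adj v (σ⁻¹ v) := by
    intro v
    have := hadj (σ⁻¹ v)
    rw [Equiv.Perm.coe_inv, Equiv.apply_symm_apply] at this
    exact this.symm
  have hnbr : ∀ v, H.neighborSet v = {σ v, σ⁻¹ v} := by
    intro v
    refine eq_pair_of_ncard_two (hH.2.2 v) (hadj v) (hinvadj v) ?_
    intro hc
    refine hσ2 v ?_
    rw [hc, Equiv.Perm.coe_inv, Equiv.apply_symm_apply]
  have hcg : cg σ = H := by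
    ext u v
    rw [cg_adj]
    constructor
    · rintro ⟨h1, h2 | h2⟩
      · rw [← h2]; exact hadj u
      · rw [← h2]; exact (hadj v).symm
    · intro h
      refine ⟨h.ne, ?_⟩
      have : v ∈ H.neighborSet u := h
      rw [hnbr u] at this
      rcases this with h2 | h2
      · exact Or.inl h2.symm
      · rw [Set.mem_singleton_iff] at h2
        right
        rw [h2, Equiv.Perm.coe_inv, Equiv.apply_symm_apply]
  refine ⟨σ, hcg, ?_, by rw [cg_inv, hcg]⟩
  intro hc
  obtain ⟨v⟩ := hH.2.1.nonempty
  refine hσ2 v ?_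
  have : σ⁻¹ (σ v) = σ (σ v) := by rw [hc]
  rw [Equiv.Perm.coe_inv, Equiv.symm_apply_apply] at this
  exact this.symm

end Fintypes

lemma card_prescribed {α β : Type*} [Fintype α] [Fintype β] [DecidableEq α] [DecidableEq β]
    (e : α → β) (he : Function.Injective e) (r : α → Bool) :
    Fintype.card {o : β → Bool // ∀ v, o (e v) = r v} =
      2 ^ (Fintype.card β - Fintype.card α) := by
  classical
  have hrange : ∀ {x : β} (h : x ∈ Set.range e), e ((Equiv.ofInjective e he).symm ⟨x, h⟩) = x :=
    fun {x} h => congrArg Subtype.val ((Equiv.ofInjective e he).apply_symm_apply ⟨x, h⟩)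
  let E : {o : β → Bool // ∀ v, o (e v) = r v} ≃ ({x : β // x ∉ Set.range e} → Bool) :=
    { toFun := fun o x => o.1 x.1
      invFun := fun g =>
        ⟨fun x => if h : x ∈ Set.range e then r ((Equiv.ofInjective e he).symm ⟨x, h⟩)
          else g ⟨x, h⟩, by
            intro v
            have h : e v ∈ Set.range e := ⟨v, rfl⟩
            simp only [h, dif_pos]
            congr 1
            exact he (hrange h)⟩
      left_inv := by
        rintro ⟨o, ho⟩
        ext x
        simp only []
        by_cases h : x ∈ Set.range e
        · rw [dif_pos h]
          rw [← ho ((Equiv.ofInjective e he).symm ⟨x, h⟩), hrange h]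
        · rw [dif_neg h]
      right_inv := by
        intro g
        funext x
        simp only []
        rw [dif_neg x.2] }
  rw [Fintype.card_congr E, Fintype.card_fun, Fintype.card_bool]
  congr 1
  have h1 : Fintype.card {x : β // x ∈ Set.range e} = Fintype.card α :=
    Fintype.card_congr (Equiv.ofInjective e he).symm
  have := Fintype.card_subtype_compl (fun x : β => x ∈ Set.range e)
  rw [this, h1]

section Main
variable {V : Type*} [Fintype V] [LinearOrder V]

lemma skset_forward {k : ℕ} {G : SimpleGraph V} (hG : 2*k+1 ≤ G.girth) (o : Sym2 V → Bool)
    (a b : Fin k → Equiv.Perm V)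
    (ha : ∀ i, ham G (cg (a i)) ∧ ∀ v, fwd o v (a i v))
    (hb : ∀ i, ham G (cg (b i)) ∧ ∀ v, fwd o v (b i v))
    (hprod : (List.ofFn a).prod = (List.ofFn b).prod) : a = b := by
  classical
  set S : ℕ → Equiv.Perm V := fun i => ((List.ofFn a).drop i).prod with hS
  set T : ℕ → Equiv.Perm V := fun i => ((List.ofFn b).drop i).prod with hT
  have hSstep : ∀ i (hi : i < k), S i = a ⟨i, hi⟩ * S (i+1) := by
    intro i hi
    rw [hS]
    simp only []
    rw [List.drop_eq_getElem_cons (by simpa using hi), List.prod_cons]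
    congr 1
    simp
  have hTstep : ∀ i (hi : i < k), T i = b ⟨i, hi⟩ * T (i+1) := by
    intro i hi
    rw [hT]
    simp only []
    rw [List.drop_eq_getElem_cons (by simpa using hi), List.prod_cons]
    congr 1
    simp
  have hSk : S k = 1 := by
    rw [hS]; simp only []
    rw [List.drop_eq_nil_of_le (by simp), List.prod_nil]
  have hTk : T k = 1 := by
    rw [hT]; simp only []
    rw [List.drop_eq_nil_of_le (by simp), List.prod_nil]
  have hS0 : S 0 = (List.ofFn a).prod := by rw [hS]; simp only []; rw [List.drop_zero]
  have hT0 : T 0 = (List.ofFn b).prod := by rw [hT]; simp only []; rw [List.drop_zero]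
  have key : ∀ i, i ≤ k → S i = T i := by
    intro i hik
    refine Equiv.ext fun v => ?_
    have hwalk := forward_walk_unique hG o k le_rfl (fun j => S (k - j) v) (fun j => T (k - j) v)
      ?_ ?_ ?_ ?_
    · have := hwalk (k - i) (by omega)
      simpa [show k - (k - i) = i from by omega] using this
    · intro j hj
      have hi : k - j - 1 < k := by omega
      have e1 : k - (j+1) = k - j - 1 := by omega
      have e2 : (k - j - 1) + 1 = k - j := by omega
      have hs := hSstep (k - j - 1) hi
      rw [e2] at hs
      have happ : S (k - (j+1)) v = a ⟨k - j - 1, hi⟩ (S (k - j) v) := by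
        rw [e1, hs]; rfl
      show G.Adj (S (k - j) v) (S (k - (j+1)) v) ∧ fwd o (S (k - j) v) (S (k - (j+1)) v)
      rw [happ]
      have hgood := (ha ⟨k - j - 1, hi⟩).1
      constructor
      · exact hgood.1 (good_adj hgood (S (k - j) v))
      · exact (ha ⟨k - j - 1, hi⟩).2 (S (k - j) v)
    · intro j hj
      have hi : k - j - 1 < k := by omega
      have e1 : k - (j+1) = k - j - 1 := by omega
      have e2 : (k - j - 1) + 1 = k - j := by omega
      have hs := hTstep (k - j - 1) hi
      rw [e2] at hs
      have happ : T (k - (j+1)) v = b ⟨k - j - 1, hi⟩ (T (k - j) v) := by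
        rw [e1, hs]; rfl
      show G.Adj (T (k - j) v) (T (k - (j+1)) v) ∧ fwd o (T (k - j) v) (T (k - (j+1)) v)
      rw [happ]
      have hgood := (hb ⟨k - j - 1, hi⟩).1
      constructor
      · exact hgood.1 (good_adj hgood (T (k - j) v))
      · exact (hb ⟨k - j - 1, hi⟩).2 (T (k - j) v)
    · simp only [Nat.sub_zero, hSk, hTk]
    · simp only [Nat.sub_self, hS0, hT0, hprod]
  funext i
  have h1 := hSstep i.1 i.2
  have h2 := hTstep i.1 i.2
  have e1 : S i.1 = T i.1 := key i.1 (by omega)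
  have e2 : S (i.1+1) = T (i.1+1) := key (i.1+1) (by omega)
  rw [e1, e2, show (⟨i.1, i.2⟩ : Fin k) = i from rfl] at h1
  rw [show (⟨i.1, i.2⟩ : Fin k) = i from rfl] at h2
  have : a i * T (i.1 + 1) = b i * T (i.1 + 1) := by rw [← h1, ← h2]
  exact mul_right_cancel this

lemma main_count {G : SimpleGraph V} (h : ℕ) (hh : {H | ham G H}.ncard = h) (hpos : 0 < h) :
    ∃ o : Sym2 V → Bool,
      h ≤ 2 ^ (Fintype.card V - 1) *
        {σ : Equiv.Perm V | ham G (cg σ) ∧ ∀ v, fwd o v (σ v)}.ncard := by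
  classical
  have hncard : ∀ o : Sym2 V → Bool,
      {σ : Equiv.Perm V | ham G (cg σ) ∧ ∀ v, fwd o v (σ v)}.ncard =
      (Finset.univ.filter
        (fun σ : Equiv.Perm V => ham G (cg σ) ∧ ∀ v, fwd o v (σ v))).card := by
    intro o
    rw [Set.ncard_eq_toFinset_card']
    congr 1
    ext σ
    simp
  set n := Fintype.card V with hn
  set N := Fintype.card (Sym2 V) with hN
  have hnN : n ≤ N := Fintype.card_le_of_injective (fun v => s(v, v)) (fun v w hvw => by
    rw [Sym2.eq_iff] at hvw; tauto)
  -- the ham finset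
  set hamF : Finset (SimpleGraph V) := Finset.univ.filter (fun H => ham G H) with hhamF
  have hhamcard : hamF.card = h := by
    rw [← hh, Set.ncard_eq_toFinset_card']
    congr 1
    ext H
    simp [hhamF]
  -- positivity gives a vertex
  have hn1 : 1 ≤ n := by
    have : hamF.Nonempty := by
      rw [← Finset.card_pos, hhamcard]; exact hpos
    obtain ⟨H, hH⟩ := this
    rw [hhamF, Finset.mem_filter] at hH
    obtain ⟨v⟩ := hH.2.2.1.nonempty
    rw [hn]
    exact Fintype.card_pos_iff.mpr ⟨v⟩
  set GoodF : Finset (Equiv.Perm V) := Finset.univ.filter (fun σ => ham G (cg σ)) with hGoodF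
  -- each ham graph has at least two traversals
  have hGoodcard : 2 * h ≤ GoodF.card := by
    have hmap : ∀ σ ∈ GoodF, cg σ ∈ hamF := by
      intro σ hσ
      rw [hGoodF, Finset.mem_filter] at hσ
      rw [hhamF, Finset.mem_filter]
      exact ⟨Finset.mem_univ _, hσ.2⟩
    rw [Finset.card_eq_sum_card_fiberwise hmap]
    calc 2 * h = hamF.card * 2 := by omega
    _ ≤ ∑ H ∈ hamF, (GoodF.filter (fun σ => cg σ = H)).card := by
        refine Finset.card_nsmul_le_sum hamF _ 2 ?_
        intro H hH
        rw [hhamF, Finset.mem_filter] at hH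
        obtain ⟨σ, hσ1, hσ2, hσ3⟩ := ham_traversal hH.2
        refine Finset.one_lt_card.mpr ⟨σ, ?_, σ⁻¹, ?_, fun hc => hσ2 hc.symm⟩
        · simp only [Finset.mem_filter, hGoodF, Finset.mem_univ, true_and]
          exact ⟨by rw [hσ1]; exact hH.2, hσ1⟩
        · simp only [Finset.mem_filter, hGoodF, Finset.mem_univ, true_and]
          exact ⟨by rw [hσ3]; exact hH.2, hσ3⟩
  -- for each good σ, number of orientations making it forward
  have hcount : ∀ σ ∈ GoodF,
      (Finset.univ.filter (fun o : Sym2 V → Bool => ∀ v, fwd o v (σ v))).card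
        = 2 ^ (N - n) := by
    intro σ hσ
    rw [hGoodF, Finset.mem_filter] at hσ
    have hσ' := hσ.2
    have heq : (Finset.univ.filter (fun o : Sym2 V → Bool => ∀ v, fwd o v (σ v)))
        = (Finset.univ.filter
            (fun o : Sym2 V → Bool => ∀ v, o s(v, σ v) = decide (v < σ v))) := by
      ext o
      simp only [Finset.mem_filter, Finset.mem_univ, true_and]
      constructor
      · intro hf v; exact (hf v).2
      · intro hf v; exact ⟨(good_ne hσ' v).symm, hf v⟩
    rw [heq, ← Fintype.card_subtype]
    rw [card_prescribed (fun v => s(v, σ v)) (good_edge_inj hσ') (fun v => decide (v < σ v))]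
  -- double counting
  have hsum : GoodF.card * 2 ^ (N - n) =
      ∑ o : Sym2 V → Bool, (Finset.univ.filter
        (fun σ : Equiv.Perm V => ham G (cg σ) ∧ ∀ v, fwd o v (σ v))).card := by
    have hsplit : ∀ o : Sym2 V → Bool,
        (Finset.univ.filter
          (fun σ : Equiv.Perm V => ham G (cg σ) ∧ ∀ v, fwd o v (σ v))).card
        = ∑ σ ∈ GoodF, (if ∀ v, fwd o v (σ v) then 1 else 0) := by
      intro o
      have heq2 : Finset.univ.filter
          (fun σ : Equiv.Perm V => ham G (cg σ) ∧ ∀ v, fwd o v (σ v))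
          = GoodF.filter (fun σ => ∀ v, fwd o v (σ v)) := by
        rw [hGoodF, Finset.filter_filter]
      rw [heq2, Finset.card_filter]
    calc GoodF.card * 2 ^ (N - n)
        = ∑ σ ∈ GoodF, 2 ^ (N - n) := by rw [Finset.sum_const, smul_eq_mul]
      _ = ∑ σ ∈ GoodF, ∑ o : Sym2 V → Bool, (if ∀ v, fwd o v (σ v) then 1 else 0) := by
          refine Finset.sum_congr rfl ?_
          intro σ hσ
          rw [← Finset.card_filter, hcount σ hσ]
      _ = ∑ o : Sym2 V → Bool, ∑ σ ∈ GoodF, (if ∀ v, fwd o v (σ v) then 1 else 0) :=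
          Finset.sum_comm
      _ = ∑ o : Sym2 V → Bool, (Finset.univ.filter
            (fun σ : Equiv.Perm V => ham G (cg σ) ∧ ∀ v, fwd o v (σ v))).card := by
          refine Finset.sum_congr rfl ?_
          intro o _
          rw [hsplit o]
  -- pigeonhole
  have hΩcard : Fintype.card (Sym2 V → Bool) = 2 ^ N := by
    rw [Fintype.card_fun, Fintype.card_bool]
  obtain ⟨o, -, ho⟩ : ∃ o : Sym2 V → Bool, o ∈ Finset.univ ∧
      2 * h * 2 ^ (N - n) ≤ 2 ^ N * (Finset.univ.filter
        (fun σ : Equiv.Perm V => ham G (cg σ) ∧ ∀ v, fwd o v (σ v))).card := by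
    refine Finset.exists_le_of_sum_le (Finset.univ_nonempty) ?_
    calc ∑ _o : Sym2 V → Bool, 2 * h * 2 ^ (N - n)
        = 2 ^ N * (2 * h * 2 ^ (N - n)) := by
          rw [Finset.sum_const, smul_eq_mul, Finset.card_univ, hΩcard]
      _ ≤ 2 ^ N * ∑ o : Sym2 V → Bool, (Finset.univ.filter
            (fun σ : Equiv.Perm V => ham G (cg σ) ∧ ∀ v, fwd o v (σ v))).card := by
          refine Nat.mul_le_mul_left _ ?_
          rw [← hsum]
          exact Nat.mul_le_mul_right _ hGoodcard
      _ = ∑ o : Sym2 V → Bool, 2 ^ N * (Finset.univ.filter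
            (fun σ : Equiv.Perm V => ham G (cg σ) ∧ ∀ v, fwd o v (σ v))).card := by
          rw [Finset.mul_sum]
  refine ⟨o, ?_⟩
  rw [hncard o]
  have hNsplit : (2:ℕ) ^ N = 2 ^ (N - n) * 2 ^ n := by
    rw [← pow_add]
    congr 1
    omega
  have hnsplit : (2:ℕ) ^ n = 2 * 2 ^ (n - 1) := by
    rw [← pow_succ']
    congr 1
    omega
  rw [hNsplit, hnsplit] at ho
  set c := (Finset.univ.filter
    (fun σ : Equiv.Perm V => ham G (cg σ) ∧ ∀ v, fwd o v (σ v))).card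
  have h2 : 2 * h * 2 ^ (N - n) ≤ 2 * (2 ^ (n-1) * c) * 2 ^ (N - n) := by
    calc 2 * h * 2 ^ (N - n) ≤ 2 ^ (N - n) * (2 * 2 ^ (n - 1)) * c := ho
      _ = 2 * (2 ^ (n-1) * c) * 2 ^ (N - n) := by ring
  have h3 : 2 * h ≤ 2 * (2 ^ (n-1) * c) :=
    Nat.le_of_mul_le_mul_right h2 (by positivity)
  omega

end Main
end Stmt15Aux

/-- If `G` is a graph on `n` vertices with girth at least `2k+1` containing `h`
Hamilton cycles, then `Sₙ` contains an `S_k`-set of size at least `h/2^{n-1}`. -/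
theorem stmt_15 (n k h : ℕ) (G : SimpleGraph (Fin n))
    (hgirth : (2 * k + 1 : ℕ∞) ≤ G.girth)
    (hham : {H : SimpleGraph (Fin n) | IsHamCycleSubgraph G H}.ncard = h) :
    ∃ A : Set (Equiv.Perm (Fin n)), IsSkSet k A ∧ h ≤ 2 ^ (n - 1) * A.ncard := by
  classical
  rcases Nat.eq_zero_or_pos h with rfl | hpos
  · refine ⟨∅, ?_, by simp⟩
    intro a b ha hb _
    cases k with
    | zero => funext i; exact i.elim0
    | succ k' => exact absurd (ha 0) (Set.notMem_empty _)
  · have hgirth' : 2 * k + 1 ≤ G.girth := by exact_mod_cast hgirth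
    have hh' : {H | Stmt15Aux.ham G H}.ncard = h := hham
    obtain ⟨o, ho⟩ := Stmt15Aux.main_count h hh' hpos
    refine ⟨{σ : Equiv.Perm (Fin n) |
      Stmt15Aux.ham G (Stmt15Aux.cg σ) ∧ ∀ v, Stmt15Aux.fwd o v (σ v)}, ?_, ?_⟩
    · intro a b ha hb hprod
      exact Stmt15Aux.skset_forward hgirth' o a b (fun i => ha i) (fun i => hb i) hprod
    · simpa [Fintype.card_fin] using ho
end

section
/- Let Γ be a finite group of order n and let A ⊆ Γ be an S_k-set. Define A' = {π ∈ Sym(Γ) : π(x) ∈ xA for all x ∈ Γ} (permutations of Γ moving each element by right-multiplication by some element of A). Then A' is an S_k-set in the symmetric group Sym(Γ). -/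
lemma tail_succ {G : Type*} [Monoid G] {k : ℕ} (π : Fin k → G) {i : ℕ} (h : i < k) :
    ((List.ofFn π).drop i).prod = π ⟨i, h⟩ * ((List.ofFn π).drop (i+1)).prod := by
  rw [List.drop_eq_getElem_cons (by simpa using h), List.prod_cons]
  simp

lemma telescope {G : Type*} [Group G] (k : ℕ) (t : ℕ → G) :
    (List.ofFn (fun j : Fin k => (t (k - j))⁻¹ * t (k - j - 1))).prod = (t k)⁻¹ * t 0 := by
  induction k with
  | zero => simp
  | succ k ih =>
    rw [List.ofFn_succ, List.prod_cons]
    have h1 : (fun j : Fin k =>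
        (t (k + 1 - (j.succ : Fin (k+1)).1))⁻¹ * t (k + 1 - (j.succ : Fin (k+1)).1 - 1))
        = fun j : Fin k => (t (k - j.1))⁻¹ * t (k - j.1 - 1) := by
      funext j
      simp [Fin.val_succ, Nat.succ_sub_succ]
    rw [h1, ih]
    simp [mul_assoc]

/-- If `A` is an `S_k`-set in a finite group `Γ`, then the set
`A' = {π ∈ Sym(Γ) : π(x) ∈ xA for all x}` is an `S_k`-set in `Sym(Γ)`. -/
theorem stmt_16 {Γ : Type*} [Group Γ] [Fintype Γ] (k : ℕ) (A : Set Γ)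
    (hA : IsSkSet k A) :
    IsSkSet k {π : Equiv.Perm Γ | ∀ x : Γ, ∃ a ∈ A, π x = x * a} := by
  intro a b ha hb hab
  classical
  set Ta : ℕ → Equiv.Perm Γ := fun i => ((List.ofFn a).drop i).prod with hTa
  set Tb : ℕ → Equiv.Perm Γ := fun i => ((List.ofFn b).drop i).prod with hTb
  have hTak : Ta k = 1 := by
    simp only [hTa]; rw [List.drop_eq_nil_of_le (by simp)]; simp
  have hTbk : Tb k = 1 := by
    simp only [hTb]; rw [List.drop_eq_nil_of_le (by simp)]; simp
  have hTaS : ∀ {i : ℕ} (h : i < k) (x : Γ), Ta i x = a ⟨i, h⟩ (Ta (i+1) x) := by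
    intro i h x
    simp only [hTa]
    rw [tail_succ a h]
    rfl
  have hTbS : ∀ {i : ℕ} (h : i < k) (x : Γ), Tb i x = b ⟨i, h⟩ (Tb (i+1) x) := by
    intro i h x
    simp only [hTb]
    rw [tail_succ b h]
    rfl
  -- the increments
  have key : ∀ (x : Γ) (j : Fin k),
      (Ta (k - j) x)⁻¹ * Ta (k - j - 1) x = (Tb (k - j) x)⁻¹ * Tb (k - j - 1) x := by
    intro x j
    have hmem : ∀ (π : Fin k → Equiv.Perm Γ), (∀ i, π i ∈ {π : Equiv.Perm Γ | ∀ x : Γ, ∃ a ∈ A, π x = x * a}) →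
        ∀ (j : Fin k), ((((List.ofFn π).drop (k - j)).prod : Equiv.Perm Γ) x)⁻¹ *
          (((List.ofFn π).drop (k - j - 1)).prod : Equiv.Perm Γ) x ∈ A := by
      intro π hπ j
      have hj : (k : ℕ) - j - 1 < k := by omega
      have hkj : (k : ℕ) - j - 1 + 1 = k - j := by omega
      rw [tail_succ π hj, hkj]
      obtain ⟨c, hc, hc2⟩ := hπ ⟨k - j - 1, hj⟩ ((((List.ofFn π).drop (k - ↑j)).prod : Equiv.Perm Γ) x)
      rw [Equiv.Perm.mul_apply, hc2]
      simpa using hc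
    have hprod : (List.ofFn (fun j : Fin k => (Ta (k - j) x)⁻¹ * Ta (k - j - 1) x)).prod
        = (List.ofFn (fun j : Fin k => (Tb (k - j) x)⁻¹ * Tb (k - j - 1) x)).prod := by
      rw [telescope k (fun i => Ta i x), telescope k (fun i => Tb i x)]
      have h0 : Ta 0 = Tb 0 := by simp only [hTa, hTb, List.drop_zero, hab]
      simp only [hTak, hTbk, h0]
    have := hA _ _ (hmem a ha) (hmem b hb) hprod
    exact congrFun this j
  have Q : ∀ m : ℕ, ∀ x : Γ, Ta (k - m) x = Tb (k - m) x := by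
    intro m
    induction m with
    | zero => intro x; simp [hTak, hTbk]
    | succ m ih =>
      intro x
      by_cases hm : m < k
      · have hk1 : k - (m + 1) = k - m - 1 := by omega
        have := key x ⟨m, hm⟩
        simp only [hk1]
        rw [← mul_left_cancel_iff (a := (Ta (k - m) x)⁻¹)]
        rw [this, ih x]
      · have : k - (m + 1) = k - m := by omega
        rw [this]; exact ih x
  have QQ : ∀ i : ℕ, i ≤ k → Ta i = Tb i := by
    intro i hi
    have h : k - (k - i) = i := by omega
    ext x
    have := Q (k - i) x
    rwa [h] at this
  funext i
  ext y
  have hi1 : (i : ℕ) + 1 ≤ k := i.2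
  set x := (Ta ((i : ℕ) + 1)).symm y with hx
  have hxy : Ta ((i : ℕ) + 1) x = y := Equiv.apply_symm_apply _ y
  have hxyb : Tb ((i : ℕ) + 1) x = y := by rw [← QQ _ hi1]; exact hxy
  have h1 : a i y = Ta i x := by rw [← hxy, ← hTaS i.2]
  have h2 : b i y = Tb i x := by rw [← hxyb, ← hTbS i.2]
  rw [h1, h2, QQ i (le_of_lt i.2)]
end

section
/- Let G be a directed graph with minimum outdegree δ⁺ ≥ 1 that contains no two distinct directed walks of length k with the same initial and same terminal vertices (G is F_k-free). Then |V(G)| ≥ (δ⁺)^k. -/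
/-- If a digraph on a finite nonempty vertex set `V` has minimum outdegree
`δ⁺ ≥ 1` and contains no two distinct directed walks of length `k` with the
same initial and same terminal vertices (it is `F_k`-free), then
`|V| ≥ (δ⁺)^k`. -/
theorem stmt_18 {V : Type*} [Fintype V] [Nonempty V] (E : V → V → Prop)
    (k δ : ℕ) (hδ : 1 ≤ δ) (hout : ∀ v : V, δ ≤ {u | E v u}.ncard)
    (hfree : ∀ v w : Fin (k + 1) → V,
      (∀ i : Fin k, E (v i.castSucc) (v i.succ)) →
      (∀ i : Fin k, E (w i.castSucc) (w i.succ)) →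
      v 0 = w 0 → v (Fin.last k) = w (Fin.last k) → v = w) :
    δ ^ k ≤ Fintype.card V := by
  classical
  obtain ⟨v0⟩ := ‹Nonempty V›
  set W : ℕ → Type _ := fun i =>
    {f : Fin (i+1) → V // f 0 = v0 ∧ ∀ j : Fin i, E (f j.castSucc) (f j.succ)} with hW
  haveI : ∀ i, Fintype (W i) := fun i => Fintype.ofFinite _
  -- step
  have step : ∀ i, δ * Fintype.card (W i) ≤ Fintype.card (W (i+1)) := by
    intro i
    let r : W (i+1) → W i := fun f =>
      ⟨Fin.init f.1, by
        constructor
        · have := f.2.1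
          simpa [Fin.init] using this
        · intro j
          have := f.2.2 j.castSucc
          simpa only [Fin.init, Fin.succ_castSucc] using this⟩
    have hcard : Fintype.card (W (i+1)) = ∑ w : W i, Fintype.card {x // r x = w} := by
      rw [← Fintype.card_sigma]
      exact Fintype.card_congr (Equiv.sigmaFiberEquiv r).symm
    rw [hcard]
    have hfib : ∀ w : W i, δ ≤ Fintype.card {x // r x = w} := by
      intro w
      have hext : ∀ u : V, E (w.1 (Fin.last i)) u →
          (Fin.snoc w.1 u : Fin (i+2) → V) 0 = v0 ∧
          ∀ j : Fin (i+1), E ((Fin.snoc w.1 u : Fin (i+2) → V) j.castSucc) ((Fin.snoc w.1 u : Fin (i+2) → V) j.succ) := by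
        intro u hu
        constructor
        · have h0 : (0 : Fin (i+2)) = Fin.castSucc (0 : Fin (i+1)) := rfl
          rw [h0, Fin.snoc_castSucc]
          exact w.2.1
        · intro j
          refine Fin.lastCases ?_ ?_ j
          · rw [Fin.succ_last, Fin.snoc_castSucc, Fin.snoc_last]
            exact hu
          · intro m
            rw [Fin.succ_castSucc, Fin.snoc_castSucc, Fin.snoc_castSucc]
            exact w.2.2 m
      have hinj : Function.Injective (fun u : {u // E (w.1 (Fin.last i)) u} =>
          (⟨⟨Fin.snoc w.1 u.1, hext u.1 u.2⟩, by
            apply Subtype.ext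
            simp only [r, Fin.init_snoc]⟩ : {x // r x = w})) := by
        intro a b hab
        apply Subtype.ext
        have := congrArg (fun x => x.1.1 (Fin.last (i+1))) hab
        simpa [Fin.snoc_last] using this
      calc δ ≤ {u | E (w.1 (Fin.last i)) u}.ncard := hout _
        _ = Fintype.card {u // E (w.1 (Fin.last i)) u} := by
              rw [Set.ncard_eq_toFinset_card', Set.toFinset_setOf, Fintype.card_subtype]
        _ ≤ Fintype.card {x // r x = w} := Fintype.card_le_of_injective _ hinj
    calc δ * Fintype.card (W i) = ∑ _w : W i, δ := by
            rw [Finset.sum_const, Finset.card_univ, smul_eq_mul, mul_comm]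
      _ ≤ ∑ w : W i, Fintype.card {x // r x = w} := Finset.sum_le_sum fun w _ => hfib w
  -- base + induction
  have hpow : ∀ i, δ ^ i ≤ Fintype.card (W i) := by
    intro i
    induction i with
    | zero =>
      simp only [pow_zero]
      have : Nonempty (W 0) := ⟨⟨fun _ => v0, rfl, fun j => j.elim0⟩⟩
      exact Fintype.card_pos
    | succ n ih =>
      calc δ ^ (n+1) = δ * δ ^ n := by ring
        _ ≤ δ * Fintype.card (W n) := Nat.mul_le_mul_left _ ih
        _ ≤ _ := step n
  -- endpoint injection for i = k
  have hinj : Function.Injective (fun f : W k => f.1 (Fin.last k)) := by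
    intro a b hab
    apply Subtype.ext
    exact hfree a.1 b.1 a.2.2 b.2.2 (a.2.1.trans b.2.1.symm) hab
  calc δ ^ k ≤ Fintype.card (W k) := hpow k
    _ ≤ Fintype.card V := Fintype.card_le_of_injective _ hinj
end

section
/- Fix ℓ ≥ 2 and m ≥ 1, and let G_{ℓ,m} be the digraph defined on vertex set V₀ ⊔ ⋯ ⊔ V_{ℓ−2} ⊔ W₀ ⊔ ⋯ ⊔ W_{ℓ−2}, where each Vᵢ = {v_{ijk} : j, k ∈ [m]} and Wᵢ = {w_{ijk} : j, k ∈ [m]}, with edges: (v_{ijk}, v_{(i+1)j'k}) for all j' and 0 ≤ i ≤ ℓ−3; (v_{(ℓ−2)jk}, w_{0j'k}) for all j'; (w_{ijk}, w_{(i+1)jk'}) for all k' and 0 ≤ i ≤ ℓ−3; and (w_{(ℓ−2)jk}, v_{0jk'}) for all k'. Then G_{ℓ,m} contains no copy of C_{ℓ,ℓ}, i.e., no two internally disjoint directed paths of length ℓ from a common vertex x to a common vertex y. -/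
/-- The edge relation of the digraph `G_{ℓ,m}`. Vertices are quadruples
`(a, i, j, k)` where `a = 0` encodes the classes `Vᵢ = {v_{ijk}}` and `a = 1`
the classes `Wᵢ = {w_{ijk}}`, with `0 ≤ i ≤ ℓ−2` and `j, k ∈ [m]`.
Edges: `(v_{ijk}, v_{(i+1)j'k})`, `(v_{(ℓ−2)jk}, w_{0j'k})`,
`(w_{ijk}, w_{(i+1)jk'})`, and `(w_{(ℓ−2)jk}, v_{0jk'})`. -/
def GEdge (ℓ m : ℕ) (x y : Fin 2 × Fin (ℓ - 1) × Fin m × Fin m) : Prop :=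
  (x.1 = 0 ∧ y.1 = 0 ∧ (y.2.1 : ℕ) = (x.2.1 : ℕ) + 1 ∧ y.2.2.2 = x.2.2.2) ∨
  (x.1 = 0 ∧ y.1 = 1 ∧ (x.2.1 : ℕ) = ℓ - 2 ∧ (y.2.1 : ℕ) = 0 ∧
    y.2.2.2 = x.2.2.2) ∨
  (x.1 = 1 ∧ y.1 = 1 ∧ (y.2.1 : ℕ) = (x.2.1 : ℕ) + 1 ∧ y.2.2.1 = x.2.2.1) ∨
  (x.1 = 1 ∧ y.1 = 0 ∧ (x.2.1 : ℕ) = ℓ - 2 ∧ (y.2.1 : ℕ) = 0 ∧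
    y.2.2.1 = x.2.2.1)

/-- The vertex swap `v ↦ (1 - a, i, k, j)`, an automorphism of `G_{ℓ,m}`. -/
def GSwap (ℓ m : ℕ) (v : Fin 2 × Fin (ℓ - 1) × Fin m × Fin m) :
    Fin 2 × Fin (ℓ - 1) × Fin m × Fin m :=
  (1 - v.1, v.2.1, v.2.2.2, v.2.2.1)

lemma gswap_edge (ℓ m : ℕ) (x y : Fin 2 × Fin (ℓ - 1) × Fin m × Fin m)
    (h : GEdge ℓ m x y) : GEdge ℓ m (GSwap ℓ m x) (GSwap ℓ m y) := by
  have hsw : ∀ a : Fin 2, a = 0 → 1 - a = 1 := by decide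
  have hsw' : ∀ a : Fin 2, a = 1 → 1 - a = 0 := by decide
  unfold GEdge GSwap at *
  rcases h with ⟨h1,h2,h3,h4⟩ | ⟨h1,h2,h3,h4,h5⟩ | ⟨h1,h2,h3,h4⟩ | ⟨h1,h2,h3,h4,h5⟩
  · exact Or.inr (Or.inr (Or.inl ⟨hsw _ h1, hsw _ h2, h3, h4⟩))
  · exact Or.inr (Or.inr (Or.inr ⟨hsw _ h1, hsw' _ h2, h3, h4, h5⟩))
  · exact Or.inl ⟨hsw' _ h1, hsw' _ h2, h3, h4⟩
  · exact Or.inr (Or.inl ⟨hsw' _ h1, hsw _ h2, h3, h4, h5⟩)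

/-- Along any walk of length `ℓ` starting in the `V`-classes, there is an
internal vertex `w_{0, j, k}` where `j` is the `j`-coordinate of the last
vertex and `k` the `k`-coordinate of the first vertex. -/
lemma vstart (ℓ m : ℕ) (hℓ : 2 ≤ ℓ)
    (P : ℕ → Fin 2 × Fin (ℓ - 1) × Fin m × Fin m)
    (hp : ∀ t, t < ℓ → GEdge ℓ m (P t) (P (t + 1)))
    (ha : (P 0).1 = 0) :
    ∃ s, 0 < s ∧ s < ℓ ∧ (P s).1 = 1 ∧ ((P s).2.1 : ℕ) = 0 ∧
      (P s).2.2.1 = (P ℓ).2.2.1 ∧ (P s).2.2.2 = (P 0).2.2.2 := by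
  set i0 := ((P 0).2.1 : ℕ) with hi0
  have hi0lt : i0 < ℓ - 1 := (P 0).2.1.isLt
  set s := ℓ - 1 - i0 with hs
  have A : ∀ t, t ≤ s →
      (P t).2.2.2 = (P 0).2.2.2 ∧
      (t < s → (P t).1 = 0 ∧ ((P t).2.1 : ℕ) = i0 + t) ∧
      (t = s → (P t).1 = 1 ∧ ((P t).2.1 : ℕ) = 0) := by
    intro t
    induction t with
    | zero =>
      intro _
      exact ⟨rfl, fun _ => ⟨ha, by omega⟩, fun h => absurd h (by omega)⟩
    | succ n ih =>
      intro hns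
      obtain ⟨ihk, ihlt, -⟩ := ih (by omega)
      obtain ⟨ha0, hlev⟩ := ihlt (by omega)
      have hedge := hp n (by omega)
      unfold GEdge at hedge
      rcases hedge with ⟨-, hy0, hyl, hyk⟩ | ⟨-, hy1, hxl, hyl, hyk⟩ |
        ⟨hx1, -, -, -⟩ | ⟨hx1, -, -, -, -⟩
      · have hylt : ((P (n+1)).2.1 : ℕ) < ℓ - 1 := (P (n+1)).2.1.isLt
        exact ⟨hyk.trans ihk, fun _ => ⟨hy0, by omega⟩, fun h => absurd h (by omega)⟩
      · exact ⟨hyk.trans ihk, fun h => absurd h (by omega), fun _ => ⟨hy1, hyl⟩⟩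
      · rw [ha0] at hx1; exact absurd hx1 (by decide)
      · rw [ha0] at hx1; exact absurd hx1 (by decide)
  obtain ⟨hAk, -, hAs⟩ := A s le_rfl
  obtain ⟨hs1a, hs0l⟩ := hAs rfl
  have B : ∀ u, u ≤ i0 + 1 →
      (P (s + u)).2.2.1 = (P s).2.2.1 ∧
      (u ≤ i0 → (P (s + u)).1 = 1 ∧ ((P (s + u)).2.1 : ℕ) = u) := by
    intro u
    induction u with
    | zero => exact fun _ => ⟨rfl, fun _ => ⟨hs1a, hs0l⟩⟩
    | succ n ih =>
      intro hn
      show (P (s+n+1)).2.2.1 = (P s).2.2.1 ∧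
        (n + 1 ≤ i0 → (P (s+n+1)).1 = 1 ∧ ((P (s+n+1)).2.1 : ℕ) = n + 1)
      obtain ⟨ihj, ihal⟩ := ih (by omega)
      obtain ⟨ha1, hlev⟩ := ihal (by omega)
      have hedge := hp (s + n) (by omega)
      unfold GEdge at hedge
      rcases hedge with ⟨hx0, -, -, -⟩ | ⟨hx0, -, -, -, -⟩ |
        ⟨-, hy1, hyl, hyj⟩ | ⟨-, -, hxl, hyl, hyj⟩
      · rw [ha1] at hx0; exact absurd hx0 (by decide)
      · rw [ha1] at hx0; exact absurd hx0 (by decide)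
      · exact ⟨hyj.trans ihj, fun _ => ⟨hy1, by omega⟩⟩
      · exact ⟨hyj.trans ihj, fun h => absurd h (by omega)⟩
  have hBl := (B (i0 + 1) le_rfl).1
  have hfin : s + (i0 + 1) = ℓ := by omega
  rw [hfin] at hBl
  exact ⟨s, by omega, by omega, hs1a, hs0l, hBl.symm, hAk⟩

/-- The digraph `G_{ℓ,m}` (`ℓ ≥ 2`, `m ≥ 1`) contains no copy of `C_{ℓ,ℓ}`:
there are no two internally disjoint directed paths of length `ℓ` with the
same initial vertex and the same terminal vertex. -/
theorem stmt_19 (ℓ m : ℕ) (hℓ : 2 ≤ ℓ) (hm : 1 ≤ m)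
    (p q : Fin (ℓ + 1) → Fin 2 × Fin (ℓ - 1) × Fin m × Fin m)
    (hp : ∀ i : Fin ℓ, GEdge ℓ m (p i.castSucc) (p i.succ))
    (hq : ∀ i : Fin ℓ, GEdge ℓ m (q i.castSucc) (q i.succ))
    (hpinj : Function.Injective p) (hqinj : Function.Injective q)
    (h0 : p 0 = q 0) (hlast : p (Fin.last ℓ) = q (Fin.last ℓ))
    (hdisj : ∀ i j : Fin (ℓ + 1), i ≠ 0 → i ≠ Fin.last ℓ → j ≠ 0 →
      j ≠ Fin.last ℓ → p i ≠ q j) : False := by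
  let P : ℕ → Fin 2 × Fin (ℓ - 1) × Fin m × Fin m :=
    fun t => p ⟨min t ℓ, Nat.lt_succ_of_le (Nat.min_le_right t ℓ)⟩
  let Q : ℕ → Fin 2 × Fin (ℓ - 1) × Fin m × Fin m :=
    fun t => q ⟨min t ℓ, Nat.lt_succ_of_le (Nat.min_le_right t ℓ)⟩
  have hPt : ∀ t (h : t < ℓ + 1), P t = p ⟨t, h⟩ :=
    fun t h => congrArg p (Fin.ext (show min t ℓ = t by omega))
  have hQt : ∀ t (h : t < ℓ + 1), Q t = q ⟨t, h⟩ :=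
    fun t h => congrArg q (Fin.ext (show min t ℓ = t by omega))
  have hP0 : P 0 = p 0 := by
    rw [hPt 0 (by omega)]; exact congrArg p (Fin.ext (by simp))
  have hQ0 : Q 0 = q 0 := by
    rw [hQt 0 (by omega)]; exact congrArg q (Fin.ext (by simp))
  have hPl : P ℓ = p (Fin.last ℓ) := by
    rw [hPt ℓ (by omega)]; exact congrArg p (Fin.ext (by simp))
  have hQl : Q ℓ = q (Fin.last ℓ) := by
    rw [hQt ℓ (by omega)]; exact congrArg q (Fin.ext (by simp))
  have hPedge : ∀ t, t < ℓ → GEdge ℓ m (P t) (P (t + 1)) := by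
    intro t ht
    rw [hPt t (by omega), hPt (t + 1) (by omega)]
    exact hp ⟨t, ht⟩
  have hQedge : ∀ t, t < ℓ → GEdge ℓ m (Q t) (Q (t + 1)) := by
    intro t ht
    rw [hQt t (by omega), hQt (t + 1) (by omega)]
    exact hq ⟨t, ht⟩
  have hne0 : ∀ (t : ℕ) (h : t < ℓ + 1), 0 < t → (⟨t, h⟩ : Fin (ℓ + 1)) ≠ 0 := by
    intro t h ht heq
    have := congrArg Fin.val heq
    simp at this; omega
  have hnel : ∀ (t : ℕ) (h : t < ℓ + 1), t < ℓ → (⟨t, h⟩ : Fin (ℓ + 1)) ≠ Fin.last ℓ := by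
    intro t h ht heq
    have := congrArg Fin.val heq
    simp [Fin.val_last] at this; omega
  have htwo : ∀ a : Fin 2, a = 0 ∨ a = 1 := by decide
  have hsub : ∀ a : Fin 2, 1 - a = 1 → a = 0 := by decide
  rcases htwo (p 0).1 with hc | hc
  · obtain ⟨s, hs0, hsl, hsa, hsi, hsj, hsk⟩ :=
      vstart ℓ m hℓ P hPedge (by rw [hP0]; exact hc)
    obtain ⟨s', hs0', hsl', hsa', hsi', hsj', hsk'⟩ :=
      vstart ℓ m hℓ Q hQedge (by rw [hQ0, ← h0]; exact hc)
    have heq : P s = Q s' := by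
      have e1 : (P s).1 = (Q s').1 := hsa.trans hsa'.symm
      have e2 : (P s).2.1 = (Q s').2.1 := Fin.ext (by rw [hsi, hsi'])
      have e3 : (P s).2.2.1 = (Q s').2.2.1 := by rw [hsj, hsj', hPl, hQl, hlast]
      have e4 : (P s).2.2.2 = (Q s').2.2.2 := by rw [hsk, hsk', hP0, hQ0, h0]
      exact Prod.ext e1 (Prod.ext e2 (Prod.ext e3 e4))
    refine hdisj ⟨s, by omega⟩ ⟨s', by omega⟩ (hne0 _ _ hs0) (hnel _ _ hsl)
      (hne0 _ _ hs0') (hnel _ _ hsl') ?_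
    rw [← hPt s (by omega), ← hQt s' (by omega)]
    exact heq
  · obtain ⟨s, hs0, hsl, hsa, hsi, hsj, hsk⟩ :=
      vstart ℓ m hℓ (fun t => GSwap ℓ m (P t))
        (fun t ht => gswap_edge ℓ m _ _ (hPedge t ht))
        (by show 1 - (P 0).1 = 0; rw [hP0, hc]; decide)
    obtain ⟨s', hs0', hsl', hsa', hsi', hsj', hsk'⟩ :=
      vstart ℓ m hℓ (fun t => GSwap ℓ m (Q t))
        (fun t ht => gswap_edge ℓ m _ _ (hQedge t ht))
        (by show 1 - (Q 0).1 = 0; rw [hQ0, ← h0, hc]; decide)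
    have heq : P s = Q s' := by
      have e1 : (P s).1 = (Q s').1 := (hsub _ hsa).trans (hsub _ hsa').symm
      have e2 : (P s).2.1 = (Q s').2.1 := Fin.ext (by
        have h1 : ((P s).2.1 : ℕ) = 0 := hsi
        have h2 : ((Q s').2.1 : ℕ) = 0 := hsi'
        rw [h1, h2])
      have e3 : (P s).2.2.1 = (Q s').2.2.1 := by
        have h1 : (P s).2.2.1 = (P 0).2.2.1 := hsk
        have h2 : (Q s').2.2.1 = (Q 0).2.2.1 := hsk'
        rw [h1, h2, hP0, hQ0, h0]
      have e4 : (P s).2.2.2 = (Q s').2.2.2 := by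
        have h1 : (P s).2.2.2 = (P ℓ).2.2.2 := hsj
        have h2 : (Q s').2.2.2 = (Q ℓ).2.2.2 := hsj'
        rw [h1, h2, hPl, hQl, hlast]
      exact Prod.ext e1 (Prod.ext e2 (Prod.ext e3 e4))
    refine hdisj ⟨s, by omega⟩ ⟨s', by omega⟩ (hne0 _ _ hs0) (hnel _ _ hsl)
      (hne0 _ _ hs0') (hnel _ _ hsl') ?_
    rw [← hPt s (by omega), ← hQt s' (by omega)]
    exact heq
end
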